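/- arXiv:2108.03616 — 6 statements merged into one kernel-verified Lean document; each statement's English description precedes it below -/
import Mathlib

section
/- Every vector z in a linear subspace W of R^n admits a conformal circuit decomposition: z can be written as a sum of at most n elementary vectors g^1,...,g^h of W, each of which conforms to z (i.e., z_i g^k_i > 0 whenever g^k_i ≠ 0). -/
open Finset

variable {ι : Type*} [Fintype ι] [DecidableEq ι]

/-- `y` conforms to `x` if `x i * y i > 0` whenever `y i ≠ 0`. -/
def Conforms (y x : ι → ℝ) : Prop := ∀ i, y i ≠ 0 → x i * y i > 0

/-- An elementary vector of `W`: a support-minimal nonzero vector of `W`. -/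
def IsElementary (W : Submodule ℝ (ι → ℝ)) (g : ι → ℝ) : Prop :=
  g ∈ W ∧ g ≠ 0 ∧
    ∀ h ∈ W, h ≠ 0 → {i | h i ≠ 0} ⊆ {i | g i ≠ 0} → {i | h i ≠ 0} = {i | g i ≠ 0}

/-- The fractional circuit imbalance measure `κ_W`. -/
noncomputable def kappa (W : Submodule ℝ (ι → ℝ)) : ℝ :=
  sSup ({1} ∪ {t : ℝ | ∃ g : ι → ℝ, IsElementary W g ∧
    ∃ i j, g i ≠ 0 ∧ g j ≠ 0 ∧ t = |g j| / |g i|})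

/-- An integer elementary vector, normalized so that the gcd of its entries is 1. -/
def IsIntElementary (W : Submodule ℝ (ι → ℝ)) (g : ι → ℤ) : Prop :=
  IsElementary W (fun i => (g i : ℝ)) ∧ Finset.univ.gcd (fun i => (g i).natAbs) = 1

/-- The max-circuit imbalance measure `κ̄_W`. -/
noncomputable def barKappa (W : Submodule ℝ (ι → ℝ)) : ℕ :=
  sSup {k : ℕ | ∃ g : ι → ℤ, IsIntElementary W g ∧
    k = Finset.univ.sup fun i => (g i).natAbs}

/-- The lcm-circuit imbalance measure `κ̇_W`: the least positive integer divisible by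
every entry of every normalized integer elementary vector. -/
noncomputable def dotKappa (W : Submodule ℝ (ι → ℝ)) : ℕ :=
  sInf {k : ℕ | 0 < k ∧ ∀ g : ι → ℤ, IsIntElementary W g → ∀ i, g i ≠ 0 → (g i).natAbs ∣ k}

/-- A rational linear subspace: one spanned by rational vectors. -/
def IsRationalSubspace (W : Submodule ℝ (ι → ℝ)) : Prop :=
  ∃ S : Set (ι → ℚ), W = Submodule.span ℝ ((fun v : ι → ℚ => fun i => ((v i : ℝ))) '' S)

/-- The orthogonal complement of `W` in `ℝ^ι` with the standard inner product. -/
def orthComp (W : Submodule ℝ (ι → ℝ)) : Submodule ℝ (ι → ℝ) where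
  carrier := {v | ∀ w ∈ W, ∑ i, v i * w i = 0}
  add_mem' := by
    intro a b ha hb w hw
    have := ha w hw
    have := hb w hw
    simp only [Set.mem_setOf_eq, Pi.add_apply, add_mul, Finset.sum_add_distrib, *]
    ring
  zero_mem' := by intro w hw; simp
  smul_mem' := by
    intro c a ha w hw
    have h := ha w hw
    simp only [Set.mem_setOf_eq, Pi.smul_apply, smul_eq_mul, mul_assoc, ← Finset.mul_sum, h,
      mul_zero]

set_option linter.unusedSectionVars false in
lemma IsElementary.smul' {W : Submodule ℝ (ι → ℝ)} {g : ι → ℝ} (hg : IsElementary W g)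
    {c : ℝ} (hc : c ≠ 0) : IsElementary W (c • g) := by
  obtain ⟨hgW, hg0, hmin⟩ := hg
  have hs : {i | (c • g) i ≠ 0} = {i | g i ≠ 0} := by
    ext i; simp [Pi.smul_apply, smul_eq_mul, hc, mul_eq_zero]
  refine ⟨W.smul_mem c hgW, fun h => hg0 ((smul_eq_zero.mp h).resolve_left hc), ?_⟩
  intro h hW h0 hsub
  rw [hs] at hsub ⊢
  exact hmin h hW h0 hsub

/-- key sign fact: if |a| ≤ |b|, c*b > 0, b+a ≠ 0 then c*(b+a) > 0 -/
lemma sign_add_aux {a b c : ℝ} (h1 : |a| ≤ |b|) (h2 : c * b > 0) (h3 : b + a ≠ 0) :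
    c * (b + a) > 0 := by
  have hc : c ≠ 0 := fun h => by simp [h] at h2
  have h4 : |c * a| ≤ |c * b| := by rw [abs_mul, abs_mul]; gcongr
  have h5 : |c * b| = c * b := abs_of_pos h2
  have h6 : c * (b + a) ≥ 0 := by
    have := neg_abs_le (c * a)
    nlinarith
  exact lt_of_le_of_ne h6 (fun h => (mul_ne_zero hc h3) h.symm)

lemma exists_elem_conform {n : ℕ} (W : Submodule ℝ (Fin n → ℝ)) (z : Fin n → ℝ)
    (hz : z ∈ W) (hz0 : z ≠ 0) :
    ∃ v : Fin n → ℝ, IsElementary W v ∧ Conforms v z ∧ {i | v i ≠ 0} ⊆ {i | z i ≠ 0} := by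
  classical
  set P : (Fin n → ℝ) → Prop := fun v =>
    v ∈ W ∧ v ≠ 0 ∧ Conforms v z ∧ {i | v i ≠ 0} ⊆ {i | z i ≠ 0} with hP
  set SC : Set ℕ := {k | ∃ v, P v ∧ ({i | v i ≠ 0}).ncard = k} with hSC
  have hne : SC.Nonempty := ⟨_, z, ⟨hz, hz0, fun i hi => mul_self_pos.mpr hi, subset_rfl⟩, rfl⟩
  obtain ⟨v, hPv, hvcard⟩ := Nat.sInf_mem hne
  obtain ⟨hvW, hv0, hvconf, hvsub⟩ := hPv
  refine ⟨v, ⟨hvW, hv0, ?_⟩, hvconf, hvsub⟩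
  intro h hW h0 hsub
  by_contra hne'
  -- strict inclusion
  have hss : {i | h i ≠ 0} ⊂ {i | v i ≠ 0} := ⟨hsub, fun hback => hne' (Set.Subset.antisymm hsub hback)⟩
  -- choose i0 minimizing |v i / h i| over supp h
  have hFne : (Finset.univ.filter (fun i => h i ≠ 0)).Nonempty := by
    obtain ⟨i, hi⟩ := Function.ne_iff.mp h0
    simp only [Pi.zero_apply] at hi
    exact ⟨i, by simp [hi]⟩
  obtain ⟨i0, hi0mem, hi0min⟩ :=
    Finset.exists_min_image (Finset.univ.filter (fun i => h i ≠ 0)) (fun i => |v i / h i|) hFne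
  have hhi0 : h i0 ≠ 0 := (Finset.mem_filter.mp hi0mem).2
  have hvi0 : v i0 ≠ 0 := hsub hhi0
  set t0 : ℝ := - (v i0 / h i0) with ht0
  set v' : Fin n → ℝ := v + t0 • h with hv'
  have hv'i0 : v' i0 = 0 := by
    simp only [hv', Pi.add_apply, Pi.smul_apply, smul_eq_mul, ht0]
    field_simp
    ring
  have hzero : ∀ i, h i = 0 → v' i = v i := by
    intro i hi; simp [hv', hi]
  have hv'conf : Conforms v' z := by
    intro i hi
    by_cases hhi : h i = 0
    · rw [hzero i hhi] at hi ⊢; exact hvconf i hi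
    · have hvi : v i ≠ 0 := hsub hhi
      have hmin' : |v i0 / h i0| ≤ |v i / h i| := hi0min i (by simp [hhi])
      have habs : |t0 * h i| ≤ |v i| := by
        rw [abs_mul, ht0, abs_neg]
        calc |v i0 / h i0| * |h i| ≤ |v i / h i| * |h i| := by gcongr
          _ = |v i| := by rw [abs_div, div_mul_cancel₀ _ (abs_ne_zero.mpr hhi)]
      have : z i * (v i + t0 * h i) > 0 :=
        sign_add_aux habs (hvconf i hvi) (by simpa [hv'] using hi)
      simpa [hv'] using this
  have hv'sub : {i | v' i ≠ 0} ⊆ {i | v i ≠ 0} := by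
    intro i hi
    by_cases hhi : h i = 0
    · rw [Set.mem_setOf_eq, hzero i hhi] at hi; exact hi
    · exact hsub hhi
  have hv'ss : {i | v' i ≠ 0} ⊂ {i | v i ≠ 0} :=
    ⟨hv'sub, fun hback => by have := hback hvi0; simp [hv'i0] at this⟩
  have hv'0 : v' ≠ 0 := by
    obtain ⟨i1, hi1v, hi1h⟩ := Set.exists_of_ssubset hss
    intro h'
    have : v' i1 = v i1 := hzero i1 (by simpa using hi1h)
    rw [h'] at this
    exact hi1v (by simpa using this.symm)
  have hv'W : v' ∈ W := W.add_mem hvW (W.smul_mem t0 hW)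
  have hcard : ({i | v' i ≠ 0}).ncard < ({i | v i ≠ 0}).ncard :=
    Set.ncard_lt_ncard hv'ss (Set.toFinite _)
  have hmem : ({i | v' i ≠ 0}).ncard ∈ SC :=
    ⟨v', ⟨hv'W, hv'0, hv'conf, hv'sub.trans hvsub⟩, rfl⟩
  have := Nat.sInf_le hmem
  omega

lemma decomp_aux {n : ℕ} (W : Submodule ℝ (Fin n → ℝ)) :
    ∀ m : ℕ, ∀ z : Fin n → ℝ, z ∈ W → ({i | z i ≠ 0}).ncard ≤ m →
    ∃ (h : ℕ) (g : Fin h → (Fin n → ℝ)), h ≤ m ∧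
      (∀ k, IsElementary W (g k) ∧ Conforms (g k) z) ∧ z = ∑ k, g k := by
  intro m
  induction m with
  | zero =>
    intro z hz hcard
    have hz0 : z = 0 := by
      funext i
      by_contra hi
      have : ({i | z i ≠ 0}).ncard ≠ 0 :=
        Set.ncard_ne_zero_of_mem (a := i) hi (Set.toFinite _)
      omega
    exact ⟨0, Fin.elim0, le_refl 0, fun k => k.elim0, by simp [hz0]⟩
  | succ m ih =>
    intro z hz hcard
    by_cases hz0 : z = 0
    · exact ⟨0, Fin.elim0, Nat.zero_le _, fun k => k.elim0, by simp [hz0]⟩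
    obtain ⟨v, hvelem, hvconf, hvsub⟩ := exists_elem_conform W z hz hz0
    classical
    have hv0 : v ≠ 0 := hvelem.2.1
    have hFne : (Finset.univ.filter (fun i => v i ≠ 0)).Nonempty := by
      obtain ⟨i, hi⟩ := Function.ne_iff.mp hv0
      simp only [Pi.zero_apply] at hi
      exact ⟨i, by simp [hi]⟩
    obtain ⟨i0, hi0mem, hi0min⟩ :=
      Finset.exists_min_image (Finset.univ.filter (fun i => v i ≠ 0)) (fun i => z i / v i) hFne
    have hvi0 : v i0 ≠ 0 := (Finset.mem_filter.mp hi0mem).2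
    have hzi0 : z i0 ≠ 0 := hvsub hvi0
    set μ : ℝ := z i0 / v i0 with hμdef
    have hμpos : 0 < μ := by
      have := hvconf i0 hvi0
      rw [hμdef]
      rw [div_pos_iff]
      rcases lt_trichotomy (v i0) 0 with h | h | h
      · right; constructor <;> nlinarith
      · exact absurd h hvi0
      · left; constructor <;> nlinarith
    set z' : Fin n → ℝ := z - μ • v with hz'def
    have hz'W : z' ∈ W := W.sub_mem hz (W.smul_mem μ hvelem.1)
    have hz'i0 : z' i0 = 0 := by
      simp only [hz'def, Pi.sub_apply, Pi.smul_apply, smul_eq_mul, hμdef]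
      field_simp
      ring
    -- sign facts for z'
    have hkey : ∀ i, z' i ≠ 0 → z i ≠ 0 ∧ z i * z' i > 0 := by
      intro i hi
      by_cases hvi : v i = 0
      · have hzi : z' i = z i := by simp [hz'def, hvi]
        rw [hzi] at hi ⊢
        exact ⟨hi, mul_self_pos.mpr hi⟩
      · have hzi : z i ≠ 0 := hvsub hvi
        refine ⟨hzi, ?_⟩
        have hmin : μ ≤ z i / v i := hi0min i (by simp [hvi])
        have hsq : (0:ℝ) ≤ v i * v i := mul_self_nonneg _
        have h1 : μ * (v i * v i) ≤ (z i / v i) * (v i * v i) :=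
          mul_le_mul_of_nonneg_right hmin hsq
        have h2 : (z i / v i) * (v i * v i) = z i * v i := by
          field_simp
        have h3 : v i * z' i ≥ 0 := by
          simp only [hz'def, Pi.sub_apply, Pi.smul_apply, smul_eq_mul]
          nlinarith
        have h4 : z i * v i > 0 := hvconf i hvi
        have h5 : z i * z' i ≥ 0 := by nlinarith [mul_nonneg (le_of_lt h4) h3, sq_nonneg (v i)]
        exact lt_of_le_of_ne h5 (fun h => (mul_ne_zero hzi hi) h.symm)
    have hz'sub : {i | z' i ≠ 0} ⊆ {i | z i ≠ 0} := fun i hi => (hkey i hi).1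
    have hz'ss : {i | z' i ≠ 0} ⊂ {i | z i ≠ 0} :=
      ⟨hz'sub, fun hback => by have := hback hzi0; simp [hz'i0] at this⟩
    have hz'card : ({i | z' i ≠ 0}).ncard ≤ m := by
      have := Set.ncard_lt_ncard hz'ss (Set.toFinite _)
      omega
    obtain ⟨h', g', hh', hg', hsum⟩ := ih z' hz'W hz'card
    refine ⟨h' + 1, Fin.cons (μ • v) g', by omega, ?_, ?_⟩
    · intro k
      refine Fin.cases ?_ ?_ k
      · refine ⟨hvelem.smul' (ne_of_gt hμpos), ?_⟩
        intro i hi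
        simp only [Fin.cons_zero, Pi.smul_apply, smul_eq_mul] at hi ⊢
        have hvi : v i ≠ 0 := fun h => hi (by simp [h])
        have := hvconf i hvi
        nlinarith
      · intro k'
        obtain ⟨helem, hconf⟩ := hg' k'
        refine ⟨by exact helem, ?_⟩
        intro i hi
        simp only [Fin.cons_succ] at hi ⊢
        have h1 : z' i * g' k' i > 0 := hconf i hi
        have hz'i : z' i ≠ 0 := fun h => by simp [h] at h1
        have h2 : z i * z' i > 0 := (hkey i hz'i).2
        nlinarith [sq_nonneg (z' i)]
    · rw [Fin.sum_cons, ← hsum]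
      simp [hz'def]

/-- every `z ∈ W` admits a conformal circuit decomposition into at most `n`
elementary vectors, each conformal with `z`. -/
theorem conformal_circuit_decomposition {n : ℕ} (W : Submodule ℝ (Fin n → ℝ))
    (z : Fin n → ℝ) (hz : z ∈ W) :
    ∃ (h : ℕ) (g : Fin h → (Fin n → ℝ)), h ≤ n ∧
      (∀ k, IsElementary W (g k) ∧ Conforms (g k) z) ∧ z = ∑ k, g k := by
  have hb : ({i | z i ≠ 0}).ncard ≤ n := by
    have := Set.ncard_le_ncard (Set.subset_univ {i | z i ≠ 0}) (Set.toFinite _)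
    simpa [Set.ncard_univ] using this
  obtain ⟨h, g, hh, hg, hsum⟩ := decomp_aux W _ z hz le_rfl
  exact ⟨h, g, le_trans hh hb, hg, hsum⟩
end

section
/- For every integer matrix A ∈ Z^{m×n}, the max-circuit imbalance κ̄_A is at most Δ_A, the maximum absolute value of a determinant of a nonsingular square submatrix of A. -/
open Finset

variable {ι : Type*} [Fintype ι] [DecidableEq ι]

/-- `Δ_A`: the maximum absolute value of the determinant of a nonsingular square
submatrix of `A`. -/
noncomputable def Delta {m n : ℕ} (A : Matrix (Fin m) (Fin n) ℤ) : ℕ :=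
  sSup {d : ℕ | ∃ (k : ℕ) (r : Fin k → Fin m) (c : Fin k → Fin n),
    Function.Injective r ∧ Function.Injective c ∧ (A.submatrix r c).det ≠ 0 ∧
    d = (A.submatrix r c).det.natAbs}

section AuxLemmas

open Finset Module Matrix

lemma exists_rows_det_ne_zero {m k : ℕ} (M : Matrix (Fin m) (Fin k) ℝ)
    (h : LinearIndependent ℝ (fun j => Mᵀ j)) :
    ∃ R : Fin k → Fin m, Function.Injective R ∧ (M.submatrix R id).det ≠ 0 := by
  classical
  have hrank : M.rank = k := by
    rw [Matrix.rank_eq_finrank_span_cols]; exact (finrank_span_eq_card h).trans (Fintype.card_fin k)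
  have hrankT : Mᵀ.rank = k := by rw [Matrix.rank_transpose]; exact hrank
  have hspan : Submodule.span ℝ (Set.range (fun i => M i)) = ⊤ := by
    apply Submodule.eq_top_of_finrank_eq
    have : Mᵀᵀ = fun i => M i := by ext i j; rfl
    rw [← this]
    refine (Matrix.rank_eq_finrank_span_cols Mᵀ).symm.trans ?_
    rw [hrankT, finrank_pi, Fintype.card_fin]
  obtain ⟨b, hbsub, hbspan, hbind⟩ := exists_linearIndependent ℝ (Set.range (fun i => M i))
  rw [hspan] at hbspan
  have hbbasis : Basis b ℝ (Fin k → ℝ) := Basis.mk hbind (by rw [Subtype.range_coe, hbspan])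
  haveI : Fintype b := FiniteDimensional.fintypeBasisIndex hbbasis
  have hcard : Fintype.card b = k := by
    have := Module.finrank_eq_card_basis hbbasis
    rw [finrank_pi, Fintype.card_fin] at this
    omega
  obtain ⟨e⟩ : Nonempty (Fin k ≃ b) := by
    exact ⟨(Fintype.equivFinOfCardEq hcard).symm⟩
  have hpick : ∀ v : b, ∃ i : Fin m, M i = (v : Fin k → ℝ) := fun v => hbsub v.2
  choose φ hφ using hpick
  refine ⟨fun t => φ (e t), ?_, ?_⟩
  · intro t t' htt
    simp only at htt
    have : (e t : Fin k → ℝ) = (e t' : Fin k → ℝ) := by rw [← hφ (e t), ← hφ (e t'), htt]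
    exact e.injective (Subtype.ext this)
  · have hrows : LinearIndependent ℝ (fun t => (M.submatrix (fun t => φ (e t)) id) t) := by
      have : (fun t => (M.submatrix (fun t => φ (e t)) id) t)
          = (fun v : b => (v : Fin k → ℝ)) ∘ e := by
        ext t j
        simp [Matrix.submatrix_apply, hφ (e t)]
      rw [this]
      exact hbind.comp e e.injective
    have := Matrix.linearIndependent_rows_iff_isUnit.mp hrows
    rw [Matrix.isUnit_iff_isUnit_det] at this
    exact this.ne_zero

lemma cramer_sum_eq_zero {k : ℕ} (B : Matrix (Fin k) (Fin (k+1)) ℤ) (t : Fin k) :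
    ∑ j, B t j * ((-1)^(j:ℕ) * (B.submatrix id j.succAbove).det) = 0 := by
  classical
  set N : Matrix (Fin (k+1)) (Fin (k+1)) ℤ := Matrix.of (Fin.cons (B t) B) with hN
  have hdet0 : N.det = 0 := by
    apply Matrix.det_zero_of_row_eq (i := 0) (j := t.succ) (Fin.succ_ne_zero t).symm
    funext j
    simp [hN, Matrix.of_apply]
    rfl
  have hexp := Matrix.det_succ_row_zero N
  rw [hdet0] at hexp
  have : ∀ j : Fin (k+1), (-1:ℤ)^(j:ℕ) * N 0 j * (N.submatrix Fin.succ j.succAbove).det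
      = B t j * ((-1)^(j:ℕ) * (B.submatrix id j.succAbove).det) := by
    intro j
    have h1 : N 0 j = B t j := by simp [hN, Matrix.of_apply]; rfl
    have h2 : N.submatrix Fin.succ j.succAbove = B.submatrix id j.succAbove := by
      ext i l
      simp [hN, Matrix.of_apply]
      rfl
    rw [h1, h2]; ring
  rw [Finset.sum_congr rfl (fun j _ => (this j))] at hexp
  omega

lemma delta_bddAbove {m n : ℕ} (A : Matrix (Fin m) (Fin n) ℤ) :
    BddAbove {d : ℕ | ∃ (k : ℕ) (r : Fin k → Fin m) (c : Fin k → Fin n),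
      Function.Injective r ∧ Function.Injective c ∧ (A.submatrix r c).det ≠ 0 ∧
      d = (A.submatrix r c).det.natAbs} := by
  classical
  set X : ℕ := (Finset.univ ×ˢ Finset.univ).sup (fun p : Fin m × Fin n => (A p.1 p.2).natAbs) + 1
    with hX
  refine ⟨m.factorial * X ^ m, ?_⟩
  rintro d ⟨k, r, c, hr, hc, hne, rfl⟩
  have hkm : k ≤ m := by
    have := Fintype.card_le_of_injective r hr
    simpa using this
  have hent : ∀ i j, |(A.submatrix r c) i j| ≤ (X : ℤ) := by
    intro i j
    rw [Matrix.submatrix_apply]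
    have h1 : (A (r i) (c j)).natAbs ≤ X - 1 := by
      rw [hX]
      simp only [Nat.add_sub_cancel]
      exact Finset.le_sup (f := fun p : Fin m × Fin n => (A p.1 p.2).natAbs)
        (b := (r i, c j)) (Finset.mem_product.mpr ⟨Finset.mem_univ _, Finset.mem_univ _⟩)
    rw [Int.abs_eq_natAbs]
    exact_mod_cast h1.trans (by omega)
  have hdet := Matrix.det_le (A := A.submatrix r c) (abv := (AbsoluteValue.abs : AbsoluteValue ℤ ℤ)) (x := (X:ℤ)) hent
  rw [Fintype.card_fin] at hdet
  have hXpos : 1 ≤ (X:ℤ) := by exact_mod_cast Nat.le_add_left 1 _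
  have h2 : k.factorial • ((X:ℤ) ^ k) ≤ (m.factorial : ℤ) * (X:ℤ) ^ m := by
    rw [nsmul_eq_mul]
    have h3 : ((k.factorial : ℤ)) ≤ m.factorial := by
      exact_mod_cast Nat.factorial_le hkm
    have h4 : (X:ℤ)^k ≤ (X:ℤ)^m := pow_le_pow_right₀ hXpos hkm
    have h5 : (0:ℤ) ≤ (X:ℤ)^k := by positivity
    nlinarith [Nat.factorial_pos k]
  have : |(A.submatrix r c).det| ≤ (m.factorial : ℤ) * (X:ℤ) ^ m := le_trans hdet h2
  rw [Int.abs_eq_natAbs] at this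
  exact_mod_cast this

end AuxLemmas

/-- `κ̄_A ≤ Δ_A` for every integer matrix `A`. -/
theorem barKappa_le_Delta {m n : ℕ} (A : Matrix (Fin m) (Fin n) ℤ) :
    barKappa (LinearMap.ker ((A.map (Int.cast : ℤ → ℝ)).mulVecLin)) ≤ Delta A := by
  classical
  apply csSup_le'
  rintro kv ⟨g, ⟨⟨hgW, hgne, hgmin⟩, hggcd⟩, rfl⟩
  have key : ∀ i, (g i).natAbs ≤ Delta A := by
    intro i₀
    by_cases hgi₀ : g i₀ = 0
    · simp [hgi₀]
    -- setup
    set s : Finset (Fin n) := Finset.univ.filter (fun i => g i ≠ 0) with hsdef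
    have hmem_s : ∀ i, i ∈ s ↔ g i ≠ 0 := by
      intro i; simp [hsdef]
    have hsupp : {i | (g i : ℝ) ≠ 0} = ↑s := by
      ext i; simp [hmem_s, Int.cast_eq_zero]
    have hi₀s : i₀ ∈ s := (hmem_s i₀).mpr hgi₀
    set k : ℕ := s.card - 1 with hk
    have hscard : s.card = k + 1 := by
      have : 0 < s.card := Finset.card_pos.mpr ⟨i₀, hi₀s⟩
      omega
    set cfull : Fin (k+1) → Fin n := fun j => s.orderEmbOfFin hscard j with hcfull
    have hcfull_inj : Function.Injective cfull := (s.orderEmbOfFin hscard).injective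
    have hcfull_mem : ∀ j, cfull j ∈ s := fun j => s.orderEmbOfFin_mem hscard j
    obtain ⟨p, hp⟩ : ∃ p : Fin (k+1), cfull p = i₀ := by
      have : i₀ ∈ Set.range (s.orderEmbOfFin hscard) := by
        rw [s.range_orderEmbOfFin hscard]; exact_mod_cast hi₀s
      exact this
    set c' : Fin k → Fin n := fun j => cfull (p.succAbove j) with hc'
    have hc'_inj : Function.Injective c' :=
      hcfull_inj.comp (Fin.succAbove_right_injective)
    have hc'_ne : ∀ j, c' j ≠ i₀ := by
      intro j h
      exact Fin.succAbove_ne p j (hcfull_inj (h.trans hp.symm))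
    -- columns of A at c' are linearly independent over ℝ
    set M : Matrix (Fin m) (Fin k) ℝ := (A.map (Int.cast : ℤ → ℝ)).submatrix id c' with hM
    have hgker : (A.map (Int.cast : ℤ → ℝ)).mulVec (fun i => (g i : ℝ)) = 0 := hgW
    have hindep : LinearIndependent ℝ (fun j => M.transpose j) := by
      rw [Fintype.linearIndependent_iff]
      intro cv hcv
      set x : Fin n → ℝ := fun i => ∑ j, if c' j = i then cv j else 0 with hx
      have hxker : (A.map (Int.cast : ℤ → ℝ)).mulVec x = 0 := by
        funext r
        show ∑ i, (A.map (Int.cast : ℤ → ℝ)) r i * x i = 0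
        have : ∀ i, (A.map (Int.cast : ℤ → ℝ)) r i * x i
            = ∑ j, if c' j = i then (A r (c' j) : ℝ) * cv j else 0 := by
          intro i
          rw [hx]
          rw [Finset.mul_sum]
          refine Finset.sum_congr rfl fun j _ => ?_
          split
          · next h => rw [← h]; simp [Matrix.map_apply]
          · ring
        rw [Finset.sum_congr rfl fun i _ => this i, Finset.sum_comm]
        have : ∀ j : Fin k, ∑ i, (if c' j = i then (A r (c' j) : ℝ) * cv j else 0)
            = (A r (c' j) : ℝ) * cv j := by
          intro j
          rw [Finset.sum_ite_eq]
          simp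
        rw [Finset.sum_congr rfl fun j _ => this j]
        calc ∑ j, (A r (c' j) : ℝ) * cv j = ∑ j, cv j * M.transpose j r := by
              refine Finset.sum_congr rfl fun j _ => ?_
              simp [hM, Matrix.map_apply, mul_comm]
          _ = 0 := by
              have := congrFun hcv r
              simpa [Finset.sum_apply] using this
      have hxzero : x = 0 := by
        by_contra hxne
        have hsub : {i | x i ≠ 0} ⊆ {i | (g i : ℝ) ≠ 0} := by
          intro i hi
          simp only [Set.mem_setOf_eq] at hi ⊢
          have : ∃ j, c' j = i := by
            by_contra hno
            push_neg at hno
            apply hi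
            rw [hx]
            simp only
            rw [Finset.sum_eq_zero]
            intro j _
            rw [if_neg (hno j)]
          obtain ⟨j, rfl⟩ := this
          exact Int.cast_ne_zero.mpr ((hmem_s _).mp (hcfull_mem _))
        have := hgmin x (by exact hxker) hxne hsub
        have hxi₀ : x i₀ = 0 := by
          rw [hx]
          simp only
          rw [Finset.sum_eq_zero]
          intro j _
          rw [if_neg (hc'_ne j)]
        have : i₀ ∈ {i | x i ≠ 0} := by
          rw [this, hsupp]
          exact_mod_cast hi₀s
        exact this hxi₀
      intro j
      have : x (c' j) = cv j := by
        rw [hx]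
        simp only
        rw [Finset.sum_eq_single j]
        · simp
        · intro j' _ hj'
          rw [if_neg (fun h => hj' (hc'_inj h))]
        · intro h; exact absurd (Finset.mem_univ j) h
      rw [← this, hxzero]
      rfl
    obtain ⟨R, hRinj, hRdet⟩ := exists_rows_det_ne_zero M hindep
    -- the determinant over ℤ
    have hMsub : M.submatrix R id = ((A.submatrix R c').map (Int.cast : ℤ → ℝ)) := by
      ext t j
      simp [hM, Matrix.map_apply]
    have hdetZ : (A.submatrix R c').det ≠ 0 := by
      intro h
      apply hRdet
      rw [hMsub]
      rw [show ((A.submatrix R c').map (Int.cast : ℤ → ℝ))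
          = (Int.castRingHom ℝ).mapMatrix (A.submatrix R c') from rfl]
      rw [← RingHom.map_det]
      rw [show (A.submatrix R c').det = 0 from h]
      simp
    -- Cramer vector
    set B : Matrix (Fin k) (Fin (k+1)) ℤ := A.submatrix R cfull with hB
    set h : Fin (k+1) → ℤ := fun j => (-1)^(j:ℕ) * (B.submatrix id j.succAbove).det with hh
    have hcram : ∀ t, ∑ j, B t j * h j = 0 := fun t => cramer_sum_eq_zero B t
    have hBsub : ∀ j : Fin (k+1),
        B.submatrix id j.succAbove = A.submatrix R (fun l => cfull (j.succAbove l)) := by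
      intro j; ext t l; simp [hB]
    have hBp : B.submatrix id p.succAbove = A.submatrix R c' := by
      rw [hBsub p]
    have hhp : h p ≠ 0 := by
      simp only [hh]
      intro hcon
      rcases mul_eq_zero.mp hcon with h1 | h1
      · exact pow_ne_zero (p:ℕ) (by norm_num : (-1:ℤ) ≠ 0) h1
      · rw [hBp] at h1; exact hdetZ h1
    set hvec : Fin n → ℤ := fun i => ∑ j, if cfull j = i then h j else 0 with hhvecdef
    have hhvec_at : ∀ j, hvec (cfull j) = h j := by
      intro j
      simp only [hhvecdef]
      rw [Finset.sum_eq_single j]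
      · simp
      · intro j' _ hj'; rw [if_neg (fun hcon => hj' (hcfull_inj hcon))]
      · intro hcon; exact absurd (Finset.mem_univ j) hcon
    have hhvec_out : ∀ i, i ∉ s → hvec i = 0 := by
      intro i hi
      simp only [hhvecdef]
      apply Finset.sum_eq_zero
      intro j _
      rw [if_neg (fun (hcon : cfull j = i) => hi (hcon ▸ hcfull_mem j))]
    set z : Fin n → ℤ := fun i => g i₀ * hvec i - h p * g i with hz
    have hz_out : ∀ i, i ∉ s → z i = 0 := by
      intro i hi
      simp only [hz]
      rw [hhvec_out i hi]
      have hg0 : g i = 0 := by by_contra hc; exact hi ((hmem_s i).mpr hc)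
      rw [hg0]; ring
    have hz_p : z i₀ = 0 := by
      simp only [hz]
      rw [← hp, hhvec_at p]; ring
    -- collapsing sums over the support
    have himage : s = Finset.image cfull Finset.univ := by
      ext i
      simp only [Finset.mem_image, Finset.mem_univ, true_and]
      constructor
      · intro hi
        have : i ∈ Set.range (s.orderEmbOfFin hscard) := by
          rw [s.range_orderEmbOfFin hscard]; exact_mod_cast hi
        obtain ⟨j, hj⟩ := this
        exact ⟨j, hj⟩
      · rintro ⟨j, rfl⟩; exact hcfull_mem j
    have collapse : ∀ f : Fin n → ℤ, (∀ i ∉ s, f i = 0) → ∑ i, f i = ∑ j, f (cfull j) := by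
      intro f hf
      rw [← Finset.sum_subset (Finset.subset_univ s) (fun i _ hi => hf i hi)]
      rw [himage, Finset.sum_image (fun a _ b _ hab => hcfull_inj hab)]
    have hsumA : ∀ t, ∑ i, A (R t) i * hvec i = 0 := by
      intro t
      rw [collapse _ (fun i hi => by rw [hhvec_out i hi, mul_zero])]
      rw [Finset.sum_congr rfl (fun j _ => by rw [hhvec_at j])]
      exact hcram t
    have hsumG : ∀ t, ∑ i, A (R t) i * g i = 0 := by
      intro t
      have hcg := congrFun hgker (R t)
      have hreal : ∑ i, (A (R t) i : ℝ) * (g i : ℝ) = 0 := by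
        simpa [Matrix.mulVec, Matrix.map_apply, dotProduct] using hcg
      have : ((∑ i, A (R t) i * g i : ℤ) : ℝ) = 0 := by push_cast; exact hreal
      exact_mod_cast this
    have hsumZ : ∀ t, ∑ i, A (R t) i * z i = 0 := by
      intro t
      simp only [hz]
      have expand : ∀ i, A (R t) i * (g i₀ * hvec i - h p * g i)
          = g i₀ * (A (R t) i * hvec i) - h p * (A (R t) i * g i) := by intro i; ring
      rw [Finset.sum_congr rfl fun i _ => expand i, Finset.sum_sub_distrib,
        ← Finset.mul_sum, ← Finset.mul_sum, hsumA t, hsumG t]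
      ring
    have hsum3 : ∀ t, ∑ j : Fin k, A (R t) (c' j) * z (c' j) = 0 := by
      intro t
      have h0 := hsumZ t
      rw [collapse _ (fun i hi => by rw [hz_out i hi, mul_zero])] at h0
      rw [Fin.sum_univ_succAbove (fun j => A (R t) (cfull j) * z (cfull j)) p] at h0
      rw [hp, hz_p, mul_zero, zero_add] at h0
      exact h0
    have hw : ∀ j : Fin k, z (c' j) = 0 := by
      have hinj : Function.Injective ((M.submatrix R id)).mulVec := by
        rw [Matrix.mulVec_injective_iff_isUnit, Matrix.isUnit_iff_isUnit_det]
        exact isUnit_iff_ne_zero.mpr hRdet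
      have hmv : (M.submatrix R id).mulVec (fun j => (z (c' j) : ℝ)) = 0 := by
        funext t
        show ∑ j, (M.submatrix R id) t j * (z (c' j) : ℝ) = 0
        have hterm : ∀ j, (M.submatrix R id) t j * (z (c' j):ℝ)
            = ((A (R t) (c' j) * z (c' j) : ℤ) : ℝ) := by
          intro j
          push_cast
          simp [hM, Matrix.map_apply]
        rw [Finset.sum_congr rfl fun j _ => hterm j, ← Int.cast_sum, hsum3 t, Int.cast_zero]
      have hzero := hinj (by rw [hmv, Matrix.mulVec_zero] :
        (M.submatrix R id).mulVec (fun j => (z (c' j) : ℝ)) = (M.submatrix R id).mulVec 0)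
      intro j
      have hcast : (z (c' j) : ℝ) = 0 := by simpa using congrFun hzero j
      exact_mod_cast hcast
    have hz_all : ∀ i, z i = 0 := by
      intro i
      by_cases hi : i ∈ s
      · obtain ⟨j, rfl⟩ : ∃ j, cfull j = i := by
          have : i ∈ Set.range (s.orderEmbOfFin hscard) := by
            rw [s.range_orderEmbOfFin hscard]; exact_mod_cast hi
          obtain ⟨j, hj⟩ := this
          exact ⟨j, hj⟩
        by_cases hjp : j = p
        · rw [hjp, hp]; exact hz_p
        · obtain ⟨l, hl⟩ := Fin.exists_succAbove_eq hjp
          rw [← hl]; exact hw l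
      · exact hz_out i hi
    have hkey : ∀ i, g i₀ * hvec i = h p * g i := by
      intro i
      have h0 := hz_all i
      simp only [hz] at h0
      exact sub_eq_zero.mp h0
    have ha : g i₀ ≠ 0 := hgi₀
    have hdvd : (g i₀).natAbs ∣ (h p).natAbs := by
      have h1 : ∀ i, (g i₀).natAbs ∣ (h p).natAbs * (g i).natAbs := by
        intro i
        rw [← Int.natAbs_mul]
        exact Int.natAbs_dvd_natAbs.mpr ⟨hvec i, (hkey i).symm⟩
      have h2 : (g i₀).natAbs ∣ Finset.univ.gcd (fun i => (h p).natAbs * (g i).natAbs) :=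
        Finset.dvd_gcd fun i _ => h1 i
      rw [Finset.gcd_mul_left, hggcd] at h2
      simpa using h2
    obtain ⟨t0, ht0⟩ : g i₀ ∣ h p := Int.natAbs_dvd_natAbs.mp hdvd
    have hhvec_eq : ∀ i, hvec i = t0 * g i := by
      intro i
      have h0 := hkey i
      rw [ht0] at h0
      have h1 : g i₀ * hvec i = g i₀ * (t0 * g i) := by rw [h0]; ring
      exact mul_left_cancel₀ ha h1
    have ht0ne : t0 ≠ 0 := by
      intro hcon
      rw [hcon, mul_zero] at ht0
      exact hhp ht0
    -- final bound
    obtain ⟨j, rfl⟩ : ∃ j, cfull j = i₀ := ⟨p, hp⟩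
    have hhj : h j = t0 * g (cfull j) := by rw [← hhvec_at j, hhvec_eq]
    have hhjne : h j ≠ 0 := by
      rw [hhj]; exact mul_ne_zero ht0ne hgi₀
    have hdetj : (A.submatrix R (fun l => cfull (j.succAbove l))).det ≠ 0 := by
      intro hcon
      apply hhjne
      simp only [hh]
      rw [hBsub j, hcon, mul_zero]
    have hcolinj : Function.Injective (fun l => cfull (j.succAbove l)) :=
      hcfull_inj.comp (Fin.succAbove_right_injective)
    have hmemD : (A.submatrix R (fun l => cfull (j.succAbove l))).det.natAbs ∈
        {d : ℕ | ∃ (k : ℕ) (r : Fin k → Fin m) (c : Fin k → Fin n),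
          Function.Injective r ∧ Function.Injective c ∧ (A.submatrix r c).det ≠ 0 ∧
          d = (A.submatrix r c).det.natAbs} :=
      ⟨k, R, fun l => cfull (j.succAbove l), hRinj, hcolinj, hdetj, rfl⟩
    have hle1 : (g (cfull j)).natAbs ≤ (h j).natAbs := by
      rw [hhj, Int.natAbs_mul]
      exact Nat.le_mul_of_pos_left _ (Int.natAbs_pos.mpr ht0ne)
    have hhj_abs : (h j).natAbs = (A.submatrix R (fun l => cfull (j.succAbove l))).det.natAbs := by
      simp only [hh]
      rw [hBsub j, Int.natAbs_mul]
      simp [Int.natAbs_pow]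
    have hfin : (A.submatrix R (fun l => cfull (j.succAbove l))).det.natAbs ≤ Delta A :=
      le_csSup (delta_bddAbove A) hmemD
    rw [← hhj_abs] at hfin
    exact le_trans hle1 hfin

  exact Finset.sup_le fun i _ => key i
end

section
/- Let A = (I_m | A') ∈ R^{m×n} be a matrix in basis form. Then for any nonsingular square submatrix M of A, every nonzero entry of M^{-1} has absolute value between 1/κ_A and κ_A. -/
open Finset

variable {ι : Type*} [Fintype ι] [DecidableEq ι]

lemma elem_proportional {W : Submodule ℝ (ι → ℝ)} {g g' : ι → ℝ}
    (hg : IsElementary W g) (hg' : IsElementary W g')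
    (hsupp : {x | g' x ≠ 0} = {x | g x ≠ 0}) :
    ∃ a : ℝ, a ≠ 0 ∧ g' = a • g := by
  obtain ⟨hgW, hg0, hgmin⟩ := hg
  obtain ⟨hg'W, hg'0, _⟩ := hg'
  obtain ⟨i₀, hi₀⟩ : ∃ i₀, g i₀ ≠ 0 := by
    by_contra hcon
    push_neg at hcon
    exact hg0 (funext fun x => hcon x)
  have hgi' : g' i₀ ≠ 0 := by
    have : i₀ ∈ {x | g x ≠ 0} := hi₀
    rw [← hsupp] at this; exact this
  refine ⟨g' i₀ / g i₀, div_ne_zero hgi' hi₀, ?_⟩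
  set a := g' i₀ / g i₀ with ha
  by_contra hcon
  have hdiff : g' - a • g ∈ W := Submodule.sub_mem W hg'W (Submodule.smul_mem W a hgW)
  have hdne : g' - a • g ≠ 0 := fun h => hcon (sub_eq_zero.mp h)
  have hsub : {x | (g' - a • g) x ≠ 0} ⊆ {x | g x ≠ 0} := by
    intro x hx
    simp only [Set.mem_setOf_eq, Pi.sub_apply, Pi.smul_apply, smul_eq_mul] at hx ⊢
    intro hgx
    apply hx
    have hg'x : g' x = 0 := by
      by_contra hne'
      have hmem : x ∈ {x | g x ≠ 0} := hsupp ▸ (show x ∈ {x | g' x ≠ 0} from hne')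
      exact hmem hgx
    rw [hg'x, hgx, mul_zero, sub_zero]
  have heq := hgmin _ hdiff hdne hsub
  have : i₀ ∈ {x | (g' - a • g) x ≠ 0} := heq ▸ (hi₀ : i₀ ∈ {x | g x ≠ 0})
  apply this
  simp only [Pi.sub_apply, Pi.smul_apply, smul_eq_mul, ha]
  field_simp
  ring

lemma kappa_set_finite (W : Submodule ℝ (ι → ℝ)) :
    (({1} ∪ {t : ℝ | ∃ g : ι → ℝ, IsElementary W g ∧
      ∃ i j, g i ≠ 0 ∧ g j ≠ 0 ∧ t = |g j| / |g i|}) : Set ℝ).Finite := by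
  apply Set.Finite.union (Set.finite_singleton 1)
  have hsub : {t : ℝ | ∃ g : ι → ℝ, IsElementary W g ∧
      ∃ i j, g i ≠ 0 ∧ g j ≠ 0 ∧ t = |g j| / |g i|} ⊆
      ⋃ p : Set ι × ι × ι, {t : ℝ | ∃ g : ι → ℝ, IsElementary W g ∧ {x | g x ≠ 0} = p.1 ∧
        g p.2.1 ≠ 0 ∧ g p.2.2 ≠ 0 ∧ t = |g p.2.2| / |g p.2.1|} := by
    rintro t ⟨g, hg, i, j, hi, hj, ht⟩
    exact Set.mem_iUnion.mpr ⟨⟨{x | g x ≠ 0}, i, j⟩, g, hg, rfl, hi, hj, ht⟩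
  refine Set.Finite.subset (Set.finite_iUnion fun p => ?_) hsub
  apply Set.Subsingleton.finite
  rintro t ⟨g, hg, hs, hi, hj, ht⟩ t' ⟨g', hg', hs', hi', hj', ht'⟩
  obtain ⟨a, ha, rfl⟩ := elem_proportional hg hg' (hs'.trans hs.symm)
  simp only [Pi.smul_apply, smul_eq_mul, abs_mul] at ht'
  rw [ht, ht']
  rw [mul_div_mul_left _ _ (abs_ne_zero.mpr ha)]

lemma kappa_bddAbove (W : Submodule ℝ (ι → ℝ)) :
    BddAbove (({1} ∪ {t : ℝ | ∃ g : ι → ℝ, IsElementary W g ∧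
      ∃ i j, g i ≠ 0 ∧ g j ≠ 0 ∧ t = |g j| / |g i|}) : Set ℝ) :=
  (kappa_set_finite W).bddAbove

lemma one_le_kappa (W : Submodule ℝ (ι → ℝ)) : 1 ≤ kappa W :=
  le_csSup (kappa_bddAbove W) (Set.mem_union_left _ rfl)

lemma ratio_le_kappa {W : Submodule ℝ (ι → ℝ)} {g : ι → ℝ} (hg : IsElementary W g)
    {i j : ι} (hi : g i ≠ 0) (hj : g j ≠ 0) : |g j| / |g i| ≤ kappa W :=
  le_csSup (kappa_bddAbove W) (Set.mem_union_right _ ⟨g, hg, i, j, hi, hj, rfl⟩)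

/-- for a matrix `A = (I_m | A')` in basis form, every nonzero entry of the
inverse of any nonsingular square submatrix `M` of `A` has absolute value between
`1/κ_A` and `κ_A`. -/
theorem inv_submatrix_entries_bounds {m n' : ℕ} (A : Matrix (Fin m) (Fin m ⊕ Fin n') ℝ)
    (hbasis : ∀ i j : Fin m, A i (Sum.inl j) = if i = j then 1 else 0)
    {k : ℕ} (r : Fin k → Fin m) (c : Fin k → Fin m ⊕ Fin n')
    (hr : Function.Injective r) (hc : Function.Injective c)
    (hdet : (A.submatrix r c).det ≠ 0) (i j : Fin k)
    (hne : (A.submatrix r c)⁻¹ i j ≠ 0) :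
    1 / kappa (LinearMap.ker A.mulVecLin) ≤ |(A.submatrix r c)⁻¹ i j| ∧
      |(A.submatrix r c)⁻¹ i j| ≤ kappa (LinearMap.ker A.mulVecLin) := by
  classical
  set W := LinearMap.ker A.mulVecLin with hWdef
  set M := A.submatrix r c with hMdef
  set N := M⁻¹ with hNdef
  have hκ1 : (1:ℝ) ≤ kappa W := one_le_kappa W
  have hκpos : (0:ℝ) < kappa W := lt_of_lt_of_le zero_lt_one hκ1
  have hdetU : IsUnit M.det := isUnit_iff_ne_zero.mpr hdet
  have hMN : M * N = 1 := Matrix.mul_nonsing_inv M hdetU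
  have hNM : N * M = 1 := Matrix.nonsing_inv_mul M hdetU
  -- every `inl` column of the submatrix comes from a selected row
  have hcol : ∀ (p : Fin k) (i' : Fin m), c p = Sum.inl i' → ∃ q, r q = i' := by
    intro p i' hcp
    by_contra hno
    push_neg at hno
    apply hdet
    apply Matrix.det_eq_zero_of_column_eq_zero p
    intro q
    rw [hMdef, Matrix.submatrix_apply, hcp, hbasis]
    exact if_neg (hno q)
  by_cases hdeg : ∃ p, c p = Sum.inl (r j)
  · -- degenerate case: the entry is 0 or 1
    obtain ⟨p, hp⟩ := hdeg
    have hMp : ∀ q, M q p = if q = j then 1 else 0 := by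
      intro q
      rw [hMdef, Matrix.submatrix_apply, hp, hbasis]
      by_cases h : q = j
      · simp [h]
      · rw [if_neg (fun hh => h (hr hh)), if_neg h]
    have hNij : N i j = if i = p then 1 else 0 := by
      have h1 : (N * M) i p = N i j := by
        rw [Matrix.mul_apply]
        rw [Finset.sum_congr rfl (fun q _ => by rw [hMp q])]
        simp
      have h2 : (N * M) i p = if i = p then 1 else 0 := by
        rw [hNM, Matrix.one_apply]
      rw [← h1, h2]
    rw [hNij] at hne ⊢
    have hip : i = p := by by_contra h; rw [if_neg h] at hne; exact hne rfl
    rw [if_pos hip, abs_one]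
    constructor
    · rw [div_le_one hκpos]; exact hκ1
    · exact hκ1
  · push_neg at hdeg
    -- hdeg : ∀ p, c p ≠ Sum.inl (r j)
    set Rfin := Finset.univ.image r with hRfin
    set T : Finset (Fin m ⊕ Fin n') :=
      insert (Sum.inl (r j)) (Finset.univ.image c ∪ Rfinᶜ.image Sum.inl) with hTdef
    have hrjR : r j ∈ Rfin := Finset.mem_image_of_mem r (Finset.mem_univ j)
    have hanotin : Sum.inl (r j) ∉ Finset.univ.image c ∪ Rfinᶜ.image Sum.inl := by
      intro hmem
      rcases Finset.mem_union.mp hmem with h | h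
      · obtain ⟨p, -, hp⟩ := Finset.mem_image.mp h
        exact hdeg p hp
      · obtain ⟨i', hi', hp⟩ := Finset.mem_image.mp h
        rw [show i' = r j from Sum.inl.inj hp] at hi'
        exact (Finset.mem_compl.mp hi') hrjR
    have hdisj : Disjoint (Finset.univ.image c) (Rfinᶜ.image Sum.inl) := by
      rw [Finset.disjoint_left]
      intro x hx hx'
      obtain ⟨p, -, hp⟩ := Finset.mem_image.mp hx
      obtain ⟨i', hi', hp'⟩ := Finset.mem_image.mp hx'
      obtain ⟨q, hq⟩ := hcol p i' (by rw [hp, ← hp'])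
      exact (Finset.mem_compl.mp hi') (hq ▸ Finset.mem_image_of_mem r (Finset.mem_univ q))
    have hsum : ∀ h : Fin m ⊕ Fin n' → ℝ, (∀ x, x ∉ T → h x = 0) → ∀ i₀ : Fin m,
        A.mulVec h i₀ = A i₀ (Sum.inl (r j)) * h (Sum.inl (r j)) +
          ((∑ p, A i₀ (c p) * h (c p)) +
           ∑ i' ∈ Rfinᶜ, A i₀ (Sum.inl i') * h (Sum.inl i')) := by
      intro h hh i₀
      have h1 : A.mulVec h i₀ = ∑ x, A i₀ x * h x := rfl
      rw [h1, ← Finset.sum_subset (Finset.subset_univ T)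
            (fun x _ hx => by rw [hh x hx, mul_zero])]
      rw [hTdef, Finset.sum_insert hanotin, Finset.sum_union hdisj,
        Finset.sum_image (fun p _ p' _ hpp => hc hpp),
        Finset.sum_image (fun a _ b _ hab => Sum.inl.inj hab)]
    have hind : ∀ h : Fin m ⊕ Fin n' → ℝ, A.mulVec h = 0 → (∀ x, x ∉ T → h x = 0) →
        h (Sum.inl (r j)) = 0 → h = 0 := by
      intro h hker hsupp h0
      have hcz : ∀ p, h (c p) = 0 := by
        have hMv : M.mulVec (fun p => h (c p)) = 0 := by
          funext q
          have hrow := hsum h hsupp (r q)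
          rw [hker] at hrow
          simp only [Pi.zero_apply] at hrow
          have e1 : A (r q) (Sum.inl (r j)) * h (Sum.inl (r j)) = 0 := by rw [h0, mul_zero]
          have e3 : ∑ i' ∈ Rfinᶜ, A (r q) (Sum.inl i') * h (Sum.inl i') = 0 := by
            apply Finset.sum_eq_zero
            intro i' hi'
            rw [hbasis, if_neg, zero_mul]
            intro hqe
            exact (Finset.mem_compl.mp hi') (hqe ▸ Finset.mem_image_of_mem r (Finset.mem_univ q))
          rw [e1, e3, zero_add, add_zero] at hrow
          have h2 : M.mulVec (fun p => h (c p)) q = ∑ p, A (r q) (c p) * h (c p) := by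
            simp [Matrix.mulVec, dotProduct, hMdef, Matrix.submatrix_apply]
          rw [h2, ← hrow]
          rfl
        intro p
        have hz : (fun p => h (c p)) = 0 := by
          have h1 : N.mulVec (M.mulVec fun p => h (c p)) = 0 := by
            rw [hMv, Matrix.mulVec_zero]
          rwa [Matrix.mulVec_mulVec, hNM, Matrix.one_mulVec] at h1
        exact congrFun hz p
      have hiz : ∀ i' ∈ Rfinᶜ, h (Sum.inl i') = 0 := by
        intro i' hi'
        have hrow := hsum h hsupp i'
        rw [hker] at hrow
        simp only [Pi.zero_apply] at hrow
        have e1 : A i' (Sum.inl (r j)) * h (Sum.inl (r j)) = 0 := by rw [h0, mul_zero]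
        have e2 : ∑ p, A i' (c p) * h (c p) = 0 :=
          Finset.sum_eq_zero fun p _ => by rw [hcz, mul_zero]
        have e3 : ∑ i'' ∈ Rfinᶜ, A i' (Sum.inl i'') * h (Sum.inl i'') = h (Sum.inl i') := by
          rw [Finset.sum_congr rfl (fun i'' _ => by rw [hbasis])]
          simp only [ite_mul, one_mul, zero_mul]
          rw [Finset.sum_ite_eq, if_pos hi']
        rw [e1, e2, e3, zero_add, zero_add] at hrow
        exact hrow.symm
      funext x
      by_cases hx : x ∈ T
      · rw [hTdef] at hx
        rcases Finset.mem_insert.mp hx with h1 | h1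
        · rw [h1]; exact h0
        · rcases Finset.mem_union.mp h1 with h2 | h2
          · obtain ⟨p, -, hp⟩ := Finset.mem_image.mp h2; rw [← hp]; exact hcz p
          · obtain ⟨i', hi', hp⟩ := Finset.mem_image.mp h2; rw [← hp]; exact hiz i' hi'
      · exact hsupp x hx
    -- the elementary vector
    set g : Fin m ⊕ Fin n' → ℝ := fun x =>
      (if x = Sum.inl (r j) then 1 else 0) - (∑ p, if x = c p then N p j else 0) +
      (∑ i' ∈ Rfinᶜ, if x = Sum.inl i' then (∑ p, N p j * A i' (c p)) else 0) with hgdef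
    have hg1 : g (Sum.inl (r j)) = 1 := by
      simp only [hgdef]
      rw [if_pos trivial]
      rw [Finset.sum_eq_zero (f := fun p => if (Sum.inl (r j) : Fin m ⊕ Fin n') = c p then N p j else 0)
        (by intro p _; exact if_neg (by intro hh; exact hdeg p hh.symm))]
      rw [Finset.sum_eq_zero (by
        intro i' hi'
        apply if_neg
        intro hh
        apply Finset.mem_compl.mp hi'
        rw [← Sum.inl.inj hh]
        exact hrjR)]
      ring
    have hg2 : ∀ p₀, g (c p₀) = -(N p₀ j) := by
      intro p₀
      simp only [hgdef]
      rw [if_neg (hdeg p₀)]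
      rw [Finset.sum_eq_single_of_mem p₀ (Finset.mem_univ p₀)
        (by intro p _ hp; exact if_neg (by intro hh; exact hp (hc hh).symm)), if_pos rfl]
      rw [Finset.sum_eq_zero (by
        intro i' hi'
        apply if_neg
        intro hh
        obtain ⟨q, hq⟩ := hcol p₀ i' hh
        apply Finset.mem_compl.mp hi'
        rw [← hq]
        exact Finset.mem_image_of_mem r (Finset.mem_univ q))]
      ring
    have hg4 : ∀ i' ∈ Rfinᶜ, g (Sum.inl i') = ∑ p, N p j * A i' (c p) := by
      intro i' hi'
      simp only [hgdef]
      rw [if_neg (by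
        intro hh
        apply Finset.mem_compl.mp hi'
        rw [Sum.inl.inj hh]
        exact hrjR)]
      rw [Finset.sum_eq_zero (by
        intro p _
        apply if_neg
        intro hh
        obtain ⟨q, hq⟩ := hcol p i' hh.symm
        apply Finset.mem_compl.mp hi'
        rw [← hq]
        exact Finset.mem_image_of_mem r (Finset.mem_univ q))]
      rw [Finset.sum_eq_single_of_mem i' hi'
        (by intro i'' _ hii; exact if_neg (by intro hh; exact hii (Sum.inl.inj hh).symm)),
        if_pos rfl]
      ring
    have hgsupp : ∀ x, x ∉ T → g x = 0 := by
      intro x hx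
      rw [hTdef, Finset.mem_insert] at hx
      push_neg at hx
      obtain ⟨hx1, hx4⟩ := hx
      rw [Finset.mem_union] at hx4
      push_neg at hx4
      obtain ⟨hx2, hx3⟩ := hx4
      simp only [hgdef]
      rw [if_neg hx1]
      rw [Finset.sum_eq_zero (by
        intro p _
        apply if_neg
        intro hh
        exact hx2 (hh ▸ Finset.mem_image_of_mem c (Finset.mem_univ p)))]
      rw [Finset.sum_eq_zero (by
        intro i' hi'
        apply if_neg
        intro hh
        exact hx3 (hh ▸ Finset.mem_image_of_mem Sum.inl hi'))]
      ring
    have hgker : A.mulVec g = 0 := by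
      funext i₀
      rw [hsum g hgsupp i₀, hg1, mul_one]
      have e2 : ∑ p, A i₀ (c p) * g (c p) = -∑ p, A i₀ (c p) * N p j := by
        rw [← Finset.sum_neg_distrib]
        exact Finset.sum_congr rfl fun p _ => by rw [hg2 p]; ring
      by_cases hiR : i₀ ∈ Rfin
      · obtain ⟨q, -, hq⟩ := Finset.mem_image.mp hiR
        have e1 : A i₀ (Sum.inl (r j)) = if q = j then 1 else 0 := by
          rw [← hq, hbasis]
          by_cases h : q = j
          · rw [if_pos h, if_pos (by rw [h])]
          · rw [if_neg h, if_neg (fun hh => h (hr hh))]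
        have e2' : ∑ p, A i₀ (c p) * N p j = if q = j then 1 else 0 := by
          have : ∑ p, A i₀ (c p) * N p j = (M * N) q j := by
            rw [Matrix.mul_apply]
            exact Finset.sum_congr rfl fun p _ => by
              rw [hMdef, Matrix.submatrix_apply, hq]
          rw [this, hMN, Matrix.one_apply]
        have e3 : ∑ i' ∈ Rfinᶜ, A i₀ (Sum.inl i') * g (Sum.inl i') = 0 := by
          apply Finset.sum_eq_zero
          intro i' hi'
          rw [hbasis, if_neg, zero_mul]
          intro hh
          rw [← hq] at hh
          exact (Finset.mem_compl.mp hi') (hh ▸ Finset.mem_image_of_mem r (Finset.mem_univ q))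
        rw [e1, e2, e2', e3, Pi.zero_apply]
        ring
      · have e1 : A i₀ (Sum.inl (r j)) = 0 := by
          rw [hbasis, if_neg]
          intro hh
          exact hiR (hh ▸ hrjR)
        have e3 : ∑ i' ∈ Rfinᶜ, A i₀ (Sum.inl i') * g (Sum.inl i') =
            ∑ p, N p j * A i₀ (c p) := by
          rw [Finset.sum_congr rfl (fun i'' _ => by rw [hbasis])]
          simp only [ite_mul, one_mul, zero_mul]
          rw [Finset.sum_ite_eq, if_pos (Finset.mem_compl.mpr hiR), hg4 i₀ (Finset.mem_compl.mpr hiR)]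
        rw [e1, e2, e3, Pi.zero_apply]
        rw [Finset.sum_congr rfl (fun p _ => mul_comm (A i₀ (c p)) (N p j))]
        ring
    have hgel : IsElementary W g := by
      refine ⟨?_, ?_, ?_⟩
      · rw [hWdef, LinearMap.mem_ker]
        show A.mulVecLin g = 0
        rw [Matrix.mulVecLin_apply]
        exact hgker
      · intro h0
        have h1 := congrFun h0 (Sum.inl (r j))
        rw [hg1] at h1
        exact one_ne_zero h1
      · intro h hhW hh0 hsub
        have hhker : A.mulVec h = 0 := by
          have := LinearMap.mem_ker.mp (hWdef ▸ hhW)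
          rwa [Matrix.mulVecLin_apply] at this
        have hhsupp : ∀ x, x ∉ T → h x = 0 := by
          intro x hx
          by_contra hxx
          exact (hsub hxx) (hgsupp x hx)
        set lam := h (Sum.inl (r j)) with hlam
        by_cases hl : lam = 0
        · exact absurd (hind h hhker hhsupp hl) hh0
        · have hdker : A.mulVec (h - lam • g) = 0 := by
            have : A.mulVecLin (h - lam • g) = 0 := by
              rw [map_sub, map_smul]
              rw [Matrix.mulVecLin_apply, Matrix.mulVecLin_apply, hhker, hgker]
              simp
            rwa [Matrix.mulVecLin_apply] at this
          have hdsupp : ∀ x, x ∉ T → (h - lam • g) x = 0 := by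
            intro x hx
            simp only [Pi.sub_apply, Pi.smul_apply, smul_eq_mul]
            rw [hhsupp x hx, hgsupp x hx, mul_zero, sub_zero]
          have hd0 : (h - lam • g) (Sum.inl (r j)) = 0 := by
            simp only [Pi.sub_apply, Pi.smul_apply, smul_eq_mul]
            rw [hg1, mul_one, ← hlam, sub_self]
          have hdz := hind _ hdker hdsupp hd0
          have hhg : h = lam • g := by
            have := sub_eq_zero.mp hdz
            exact this
          ext x
          simp only [Set.mem_setOf_eq, hhg, Pi.smul_apply, smul_eq_mul]
          constructor
          · intro hx hgx
            exact hx (by rw [hgx, mul_zero])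
          · intro hx hmx
            rcases mul_eq_zero.mp hmx with h' | h'
            · exact hl h'
            · exact hx h'
    have hgci : g (c i) = -(N i j) := hg2 i
    have hci : g (c i) ≠ 0 := by rw [hgci]; exact neg_ne_zero.mpr hne
    have hg1ne : g (Sum.inl (r j)) ≠ 0 := by rw [hg1]; exact one_ne_zero
    have hupper := ratio_le_kappa hgel hg1ne hci
    have hlower := ratio_le_kappa hgel hci hg1ne
    rw [hg1, hgci, abs_neg, abs_one, div_one] at hupper
    rw [hg1, hgci, abs_neg, abs_one] at hlower
    have habs : 0 < |N i j| := abs_pos.mpr hne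
    exact ⟨(one_div_le hκpos habs).mpr hlower, hupper⟩
end

section
/- Let W ⊂ R^n be a linear subspace. Then κ_W = 1 if and only if there exists a totally unimodular matrix A such that W = ker(A). -/
open Finset

variable {ι : Type*} [Fintype ι] [DecidableEq ι]

/-- A totally unimodular matrix: every square subdeterminant is `0`, `1` or `-1`. -/
def IsTU {m n : ℕ} (A : Matrix (Fin m) (Fin n) ℝ) : Prop :=
  ∀ (k : ℕ) (r : Fin k → Fin m) (c : Fin k → Fin n),
    (A.submatrix r c).det = 0 ∨ (A.submatrix r c).det = 1 ∨ (A.submatrix r c).det = -1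


namespace KappaTU
open Matrix

def UnitRatios (W : Submodule ℝ (ι → ℝ)) : Prop :=
  ∀ g, IsElementary W g → ∀ i j, g i ≠ 0 → g j ≠ 0 → |g j| = |g i|


lemma kappa_eq_one_iff (W : Submodule ℝ (ι → ℝ)) : kappa W = 1 ↔ UnitRatios W := by
  constructor
  · intro hk g hg i j hi hj
    by_contra hne
    have hgi : (0:ℝ) < |g i| := abs_pos.mpr hi
    have hgj : (0:ℝ) < |g j| := abs_pos.mpr hj
    have hs : ∃ s ∈ ({1} ∪ {t : ℝ | ∃ g : ι → ℝ, IsElementary W g ∧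
        ∃ i j, g i ≠ 0 ∧ g j ≠ 0 ∧ t = |g j| / |g i|} : Set ℝ), 1 < s := by
      rcases lt_or_gt_of_ne hne with hlt | hgt
      · refine ⟨|g i| / |g j|, Or.inr ⟨g, hg, j, i, hj, hi, rfl⟩, ?_⟩
        exact (one_lt_div hgj).mpr hlt
      · refine ⟨|g j| / |g i|, Or.inr ⟨g, hg, i, j, hi, hj, rfl⟩, ?_⟩
        exact (one_lt_div hgi).mpr hgt
    obtain ⟨s, hsmem, hs1⟩ := hs
    by_cases hb : BddAbove ({1} ∪ {t : ℝ | ∃ g : ι → ℝ, IsElementary W g ∧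
        ∃ i j, g i ≠ 0 ∧ g j ≠ 0 ∧ t = |g j| / |g i|} : Set ℝ)
    · have := le_csSup hb hsmem
      rw [show sSup ({1} ∪ {t : ℝ | ∃ g : ι → ℝ, IsElementary W g ∧
        ∃ i j, g i ≠ 0 ∧ g j ≠ 0 ∧ t = |g j| / |g i|} : Set ℝ) = kappa W from rfl, hk] at this
      linarith
    · have := Real.sSup_of_not_bddAbove hb
      rw [show sSup ({1} ∪ {t : ℝ | ∃ g : ι → ℝ, IsElementary W g ∧
        ∃ i j, g i ≠ 0 ∧ g j ≠ 0 ∧ t = |g j| / |g i|} : Set ℝ) = kappa W from rfl, hk] at this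
      norm_num at this
  · intro hu
    have hset : ({1} ∪ {t : ℝ | ∃ g : ι → ℝ, IsElementary W g ∧
        ∃ i j, g i ≠ 0 ∧ g j ≠ 0 ∧ t = |g j| / |g i|} : Set ℝ) = {1} := by
      apply Set.eq_of_subset_of_subset
      · rintro t (ht | ⟨g, hg, i, j, hi, hj, rfl⟩)
        · exact ht
        · have := hu g hg i j hi hj
          simp only [Set.mem_singleton_iff, this]
          exact div_self (abs_ne_zero.mpr hi)
      · intro t ht; exact Or.inl ht
    unfold kappa
    rw [hset, csSup_singleton]

noncomputable def cof {d : ℕ} (M : Matrix (Fin d) (Fin (d+1)) ℝ) : Fin (d+1) → ℝ :=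
  fun j => (-1 : ℝ)^(j : ℕ) * (M.submatrix id j.succAbove).det


lemma mulVec_cof {d : ℕ} (M : Matrix (Fin d) (Fin (d+1)) ℝ) : M.mulVec (cof M) = 0 := by
  funext r
  have hN : (Matrix.of (Fin.cons (M r) M) : Matrix (Fin (d+1)) (Fin (d+1)) ℝ).det = 0 :=
    Matrix.det_zero_of_row_eq (i := 0) (j := r.succ) (Fin.succ_ne_zero r).symm (funext fun k => by rfl)
  rw [Matrix.det_succ_row_zero] at hN
  have hsub : ∀ j : Fin (d+1),
      (Matrix.of (Fin.cons (M r) M) : Matrix (Fin (d+1)) (Fin (d+1)) ℝ).submatrix Fin.succ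
        j.succAbove = M.submatrix id j.succAbove := by
    intro j; ext i k; rfl
  simp only [hsub] at hN
  have : ∀ j : Fin (d+1), (Matrix.of (Fin.cons (M r) M) : Matrix (Fin (d+1)) (Fin (d+1)) ℝ) 0 j
      = M r j := by intro j; rfl
  simp only [this] at hN
  calc M.mulVec (cof M) r = ∑ j, M r j * cof M j := rfl
    _ = ∑ j : Fin (d+1), (-1 : ℝ)^(j:ℕ) * M r j * (M.submatrix id j.succAbove).det := by
        apply Finset.sum_congr rfl; intro j _; unfold cof; ring
    _ = 0 := hN
  
lemma eq_smul_cof {d : ℕ} (M : Matrix (Fin d) (Fin (d+1)) ℝ) (p : Fin (d+1))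
    (hp : cof M p ≠ 0) (g : Fin (d+1) → ℝ) (hg : M.mulVec g = 0) :
    g = (g p / cof M p) • cof M := by
  set c := g p / cof M p with hc
  set y : Fin (d+1) → ℝ := g - c • cof M with hy
  have hyp : y p = 0 := by
    simp only [hy, Pi.sub_apply, Pi.smul_apply, smul_eq_mul, hc]
    field_simp
    ring
  have hMy : M.mulVec y = 0 := by
    rw [hy, Matrix.mulVec_sub, Matrix.mulVec_smul, mulVec_cof, hg]; simp
  have hdet : (M.submatrix id p.succAbove).det ≠ 0 := by
    intro h; apply hp; unfold cof; rw [h]; ring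
  have hz : (fun k => y (p.succAbove k)) = 0 := by
    apply Matrix.eq_zero_of_mulVec_eq_zero hdet
    funext r
    have h1 := congrFun hMy r
    rw [show (M.mulVec y r) = ∑ j, M r j * y j from rfl,
      Fin.sum_univ_succAbove (fun j => M r j * y j) p, hyp] at h1
    simp only [mul_zero, zero_add] at h1
    calc (M.submatrix id p.succAbove).mulVec (fun k => y (p.succAbove k)) r
        = ∑ k, M r (p.succAbove k) * y (p.succAbove k) := rfl
      _ = 0 := h1
  have hy0 : y = 0 := by
    funext j
    rcases eq_or_ne j p with rfl | hj
    · exact hyp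
    · obtain ⟨k, hk⟩ := Fin.exists_succAbove_eq hj
      rw [← hk]
      exact congrFun hz k
  exact sub_eq_zero.mp (hy.symm.trans hy0)

lemma abs_det_submatrix_congr {k n : ℕ} (B : Matrix (Fin k) (Fin n) ℝ)
    {c1 c2 : Fin k → Fin n} (h1 : Function.Injective c1)
    (hr : Set.range c1 = Set.range c2) :
    |(B.submatrix id c1).det| = |(B.submatrix id c2).det| := by
  have hex : ∀ j, ∃ i, c2 i = c1 j := fun j => by
    have : c1 j ∈ Set.range c2 := hr ▸ Set.mem_range_self j
    exact this
  choose φ hφ using hex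
  have hinj : Function.Injective φ := fun a b hab => by
    apply h1; rw [← hφ a, ← hφ b, hab]
  let π : Equiv.Perm (Fin k) := Equiv.ofBijective φ (Finite.injective_iff_bijective.mp hinj)
  have hBc : B.submatrix id c1 = (B.submatrix id c2).submatrix id π := by
    ext i j
    simp only [Matrix.submatrix_apply, id_eq, Equiv.ofBijective_apply, π, hφ]
  rw [hBc, Matrix.det_permute', abs_mul, abs_unit_intCast, one_mul]


lemma exists_rows_det_ne_zero {m d : ℕ} (M : Matrix (Fin m) (Fin d) ℝ)
    (h : LinearIndependent ℝ (fun j => Mᵀ j)) :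
    ∃ r : Fin d → Fin m, (M.submatrix r id).det ≠ 0 := by
  have hrank : M.rank = d := by
    have hinj : Function.Injective M.mulVecLin := by
      have h2 := Matrix.mulVec_injective_iff.mpr h
      rwa [← Matrix.coe_mulVecLin] at h2
    have := LinearMap.finrank_range_of_inj hinj
    rw [Matrix.rank, this, Module.finrank_fin_fun]
  have hspan : Submodule.span ℝ (Set.range (fun i => M i)) = ⊤ := by
    have h2 : M.rank = Module.finrank ℝ (Submodule.span ℝ (Set.range (fun i => M i))) := by
      rw [Matrix.rank_eq_finrank_span_row]
      rfl
    apply Submodule.eq_top_of_finrank_eq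
    rw [← h2, hrank, Module.finrank_fin_fun]
  obtain ⟨b, hbsub, hbspan, hbind⟩ := exists_linearIndependent ℝ (Set.range (fun i => M i))
  rw [hspan] at hbspan
  have hbfin : b.Finite := Set.Finite.subset (Set.finite_range _) hbsub
  haveI : Fintype b := hbfin.fintype
  let bas : Module.Basis b ℝ (Fin d → ℝ) := Module.Basis.mk hbind (by rw [Subtype.range_coe]; exact hbspan.ge)
  have hcard : Fintype.card b = d := by
    rw [← Module.finrank_eq_card_basis bas, Module.finrank_fin_fun]
  let e : Fin d ≃ b := (Fintype.equivFinOfCardEq hcard).symm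
  have hexr : ∀ k : Fin d, ∃ i : Fin m, M i = (e k : Fin d → ℝ) := fun k => by
    have : (e k : Fin d → ℝ) ∈ Set.range (fun i => M i) := hbsub (e k).2
    obtain ⟨i, hi⟩ := this
    exact ⟨i, hi⟩
  choose r hrr using hexr
  refine ⟨r, ?_⟩
  have hrows : LinearIndependent ℝ (fun k : Fin d => (M.submatrix r id) k) := by
    have : (fun k : Fin d => (M.submatrix r id) k) = (fun x : b => (x : Fin d → ℝ)) ∘ e := by
      funext k; ext j
      simp only [Matrix.submatrix_apply, id_eq, Function.comp_apply]
      rw [show M (r k) = (e k : Fin d → ℝ) from hrr k]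
    rw [this]
    exact hbind.comp e e.injective
  have hu : IsUnit (M.submatrix r id) := Matrix.linearIndependent_rows_iff_isUnit.mp hrows
  exact isUnit_iff_ne_zero.mp ((Matrix.isUnit_iff_isUnit_det _).mp hu)

noncomputable def pushVec {s n : ℕ} (e : Fin s → Fin n) (x : Fin s → ℝ) : Fin n → ℝ :=
  fun p => if h : ∃ k, e k = p then x h.choose else 0

lemma pushVec_apply {s n : ℕ} {e : Fin s → Fin n} (he : Function.Injective e)
    (x : Fin s → ℝ) (k : Fin s) : pushVec e x (e k) = x k := by
  have h : ∃ k', e k' = e k := ⟨k, rfl⟩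
  rw [pushVec, dif_pos h]
  exact congrArg x (he h.choose_spec)

lemma pushVec_eq_zero {s n : ℕ} {e : Fin s → Fin n} {p : Fin n} (h : ∀ k, e k ≠ p)
    (x : Fin s → ℝ) : pushVec e x p = 0 := by
  rw [pushVec, dif_neg]; push_neg; exact h

lemma sum_comp_inj {s n : ℕ} {e : Fin s → Fin n} (he : Function.Injective e)
    (f : Fin n → ℝ) (hf : ∀ p, (∀ k, e k ≠ p) → f p = 0) : ∑ k, f (e k) = ∑ p, f p := by
  rw [← Finset.sum_image (f := f) (g := e) (fun a _ b _ hab => he hab)]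
  apply Finset.sum_subset (Finset.subset_univ _)
  intro p _ hp
  apply hf
  intro k hk
  exact hp (Finset.mem_image.mpr ⟨k, Finset.mem_univ k, hk⟩)


lemma col_inj_of_det {m n : ℕ} {A : Matrix (Fin m) (Fin n) ℝ} {c : Fin m → Fin n}
    (h : (A.submatrix id c).det ≠ 0) : Function.Injective c := by
  intro a b hab
  by_contra hne
  exact h (Matrix.det_zero_of_column_eq hne (fun x => by
    simp only [Matrix.submatrix_apply, id_eq, hab]))


lemma unitRatios_of_TU {m n : ℕ} (A : Matrix (Fin m) (Fin n) ℝ) (hA : IsTU A) :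
    UnitRatios (LinearMap.ker A.mulVecLin) := by
  intro g hg i j hi hj
  rcases eq_or_ne j i with rfl | hij
  · rfl
  have hAg : A.mulVec g = 0 := by
    have := LinearMap.mem_ker.mp hg.1
    rwa [Matrix.mulVecLin_apply] at this
  classical
  set C : Finset (Fin n) := Finset.univ.filter (fun p => g p ≠ 0) with hC
  have hmemC : ∀ p, p ∈ C ↔ g p ≠ 0 := fun p => by simp [hC]
  set D : Finset (Fin n) := C.erase i with hD
  set d : ℕ := D.card with hd
  have hiC : i ∈ C := (hmemC i).mpr hi
  have hcard : C.card = d + 1 := by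
    have h1 := Finset.card_pos.mpr ⟨i, hiC⟩
    rw [hd, hD, Finset.card_erase_of_mem hiC]
    omega
  have hjD : j ∈ D := Finset.mem_erase.mpr ⟨hij, (hmemC j).mpr hj⟩
  have hiD : i ∉ D := Finset.notMem_erase i C
  -- enumeration of D
  set eD : Fin d → Fin n := fun k => ((D.orderIsoOfFin hd.symm) k : Fin n) with heD
  have heDinj : Function.Injective eD := fun a b hab =>
    (D.orderIsoOfFin hd.symm).injective (Subtype.ext hab)
  have heDmem : ∀ k, eD k ∈ D := fun k => ((D.orderIsoOfFin hd.symm) k).2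
  have heDsurj : ∀ p ∈ D, ∃ k, eD k = p := fun p hp => by
    obtain ⟨k, hk⟩ := (D.orderIsoOfFin hd.symm).surjective ⟨p, hp⟩
    exact ⟨k, congrArg Subtype.val hk⟩
  -- columns of A over D are linearly independent
  have hind : LinearIndependent ℝ (fun k : Fin d => (A.submatrix id eD)ᵀ k) := by
    rw [Fintype.linearIndependent_iff]
    intro μ hμ k0
    by_contra hk0
    set h : Fin n → ℝ := pushVec eD μ with hh
    have hsuppD : ∀ p, h p ≠ 0 → p ∈ D := fun p hp => by
      by_contra hpD
      exact hp (by rw [hh]; exact pushVec_eq_zero (fun k hk => hpD (by rw [← hk]; exact heDmem k)) μ)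
    have hker : h ∈ LinearMap.ker A.mulVecLin := by
      rw [LinearMap.mem_ker, Matrix.mulVecLin_apply]
      funext rr
      have hsum : ∑ k, A rr (eD k) * μ k = 0 := by
        have h2 := congrFun hμ rr
        simp only [Finset.sum_apply, Pi.smul_apply, Matrix.transpose_apply,
          Matrix.submatrix_apply, id_eq, smul_eq_mul, Pi.zero_apply] at h2
        rw [← h2]
        exact Finset.sum_congr rfl (fun k _ => mul_comm _ _)
      calc A.mulVec h rr = ∑ p, A rr p * h p := rfl
        _ = ∑ k, A rr (eD k) * h (eD k) := by
            refine (sum_comp_inj heDinj _ (fun p hp => ?_)).symm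
            have hp0 : h p = 0 := by rw [hh]; exact pushVec_eq_zero hp μ
            rw [hp0, mul_zero]
        _ = ∑ k, A rr (eD k) * μ k := by
            refine Finset.sum_congr rfl (fun k _ => ?_)
            rw [hh, pushVec_apply heDinj]
        _ = 0 := hsum
    have hne : h ≠ 0 := by
      intro h0
      apply hk0
      rw [← pushVec_apply heDinj μ k0, ← hh, h0, Pi.zero_apply]
    have hsub : {p | h p ≠ 0} ⊆ {p | g p ≠ 0} := fun p hp =>
      (hmemC p).mp (Finset.mem_of_mem_erase (hsuppD p hp))
    have heq := hg.2.2 h hker hne hsub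
    have : i ∈ {p | h p ≠ 0} := heq ▸ hi
    exact hiD (hsuppD i this)
  obtain ⟨r, hr⟩ := exists_rows_det_ne_zero (A.submatrix id eD) hind
  set e' : Fin (d+1) → Fin n := Fin.snoc eD i with he'
  have he'last : e' (Fin.last d) = i := by simp [he']
  have he'cast : ∀ k : Fin d, e' (Fin.castSucc k) = eD k := fun k => by simp [he']
  have he'memC : ∀ a, e' a ∈ C := fun a => by
    induction a using Fin.lastCases with
    | last => rw [he'last]; exact hiC
    | cast k => rw [he'cast]; exact Finset.mem_of_mem_erase (heDmem k)
  have he'inj : Function.Injective e' := by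
    intro a b hab
    induction a using Fin.lastCases with
    | last =>
      induction b using Fin.lastCases with
      | last => rfl
      | cast kb =>
        rw [he'last, he'cast] at hab
        exact absurd (by rw [hab]; exact heDmem kb) hiD
    | cast ka =>
      induction b using Fin.lastCases with
      | last =>
        rw [he'last, he'cast] at hab
        exact absurd (by rw [← hab]; exact heDmem ka) hiD
      | cast kb =>
        rw [he'cast, he'cast] at hab
        exact congrArg Fin.castSucc (heDinj hab)
  set M' : Matrix (Fin d) (Fin (d+1)) ℝ := A.submatrix r e' with hM'
  have hM'g : M'.mulVec (g ∘ e') = 0 := by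
    funext k
    simp only [Pi.zero_apply]
    calc M'.mulVec (g ∘ e') k = ∑ a, A (r k) (e' a) * g (e' a) := rfl
      _ = ∑ p, A (r k) p * g p := by
          refine sum_comp_inj he'inj (fun p => A (r k) p * g p) (fun p hp => ?_)
          have hgp : g p = 0 := by
            by_contra hgp
            obtain ⟨a, ha⟩ : ∃ a, e' a = p := by
              rcases eq_or_ne p i with rfl | hpi
              · exact ⟨Fin.last d, he'last⟩
              · obtain ⟨k', hk'⟩ := heDsurj p (Finset.mem_erase.mpr ⟨hpi, (hmemC p).mpr hgp⟩)
                exact ⟨Fin.castSucc k', by rw [he'cast]; exact hk'⟩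
            exact hp a ha
          show A (r k) p * g p = 0
          rw [hgp, mul_zero]
      _ = 0 := by
          have h2 : A.mulVec g (r k) = 0 := by rw [hAg]; rfl
          exact h2
  have hsublast : M'.submatrix id (Fin.last d).succAbove
      = (A.submatrix id eD).submatrix r id := by
    ext a b
    simp only [Matrix.submatrix_apply, id_eq, hM', Fin.succAbove_last]
    rw [he'cast]
  have hcoflast : cof M' (Fin.last d) ≠ 0 := by
    intro h0
    unfold cof at h0
    rcases mul_eq_zero.mp h0 with h1 | h1
    · exact pow_ne_zero _ (by norm_num : (-1:ℝ) ≠ 0) h1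
    · rw [hsublast] at h1
      exact hr h1
  set lam : ℝ := (g ∘ e') (Fin.last d) / cof M' (Fin.last d) with hlam
  have hgc : g ∘ e' = lam • cof M' := eq_smul_cof M' (Fin.last d) hcoflast (g ∘ e') hM'g
  have habs : ∀ a, |cof M' a| = 1 := by
    intro a
    have hga : g (e' a) ≠ 0 := (hmemC _).mp (he'memC a)
    have hsuba : M'.submatrix id a.succAbove = A.submatrix r (e' ∘ a.succAbove) := by
      ext x y
      simp [hM']
    have hcofa : cof M' a ≠ 0 := by
      intro h0
      apply hga
      have h2 := congrFun hgc a
      simp only [Function.comp_apply, Pi.smul_apply, smul_eq_mul, h0, mul_zero] at h2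
      exact h2
    have hdet : (A.submatrix r (e' ∘ a.succAbove)).det ≠ 0 := by
      intro h0
      apply hcofa
      unfold cof
      rw [hsuba, h0, mul_zero]
    rcases hA d r (e' ∘ a.succAbove) with h0 | h1 | h1 <;>
      [exact absurd h0 hdet;
       (unfold cof; rw [hsuba, h1, abs_mul, abs_pow]; norm_num);
       (unfold cof; rw [hsuba, h1, abs_mul, abs_pow]; norm_num)]
  have habs' : ∀ a, |g (e' a)| = |lam| := by
    intro a
    have h2 := congrFun hgc a
    simp only [Function.comp_apply, Pi.smul_apply, smul_eq_mul] at h2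
    rw [h2, abs_mul, habs a, mul_one]
  obtain ⟨kj, hkj⟩ := heDsurj j hjD
  have hji : |g j| = |lam| := by
    rw [← hkj, ← he'cast kj]
    exact habs' (Fin.castSucc kj)
  have hii : |g i| = |lam| := by
    rw [← he'last]
    exact habs' (Fin.last d)
  rw [hji, hii]

lemma abs_det_exchange {m n : ℕ} (A : Matrix (Fin m) (Fin n) ℝ)
    (hu : UnitRatios (LinearMap.ker A.mulVecLin))
    (c c' : Fin m → Fin n) (js : Fin m) (hcc' : ∀ j, j ≠ js → c' j = c j)
    (hc : (A.submatrix id c).det ≠ 0) (hc' : (A.submatrix id c').det ≠ 0) :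
    |(A.submatrix id c').det| = |(A.submatrix id c).det| := by
  rcases eq_or_ne (c' js) (c js) with hsame | hdiff
  · have : c' = c := funext fun j => by
      rcases eq_or_ne j js with rfl | hj
      · exact hsame
      · exact hcc' j hj
    rw [this]
  have hcinj : Function.Injective c := col_inj_of_det hc
  have hc'inj : Function.Injective c' := col_inj_of_det hc'
  set dc : Fin (m+1) → Fin n := Fin.snoc c (c' js) with hdc
  have hdlast : dc (Fin.last m) = c' js := by simp [hdc]
  have hdcast : ∀ k : Fin m, dc (Fin.castSucc k) = c k := fun k => by simp [hdc]
  have hdinj : Function.Injective dc := by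
    intro a b hab
    induction a using Fin.lastCases with
    | last =>
      induction b using Fin.lastCases with
      | last => rfl
      | cast kb =>
        rw [hdlast, hdcast] at hab
        rcases eq_or_ne kb js with rfl | hkb
        · exact absurd hab hdiff
        · exact absurd (hc'inj ((hcc' kb hkb).symm ▸ hab : c' js = c' kb)) (Ne.symm hkb)
    | cast ka =>
      induction b using Fin.lastCases with
      | last =>
        rw [hdlast, hdcast] at hab
        rcases eq_or_ne ka js with rfl | hka
        · exact absurd hab.symm hdiff
        · exact absurd (hc'inj ((hcc' ka hka).symm ▸ hab.symm : c' js = c' ka)) (Ne.symm hka)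
      | cast kb =>
        rw [hdcast, hdcast] at hab
        exact congrArg Fin.castSucc (hcinj hab)
  set M : Matrix (Fin m) (Fin (m+1)) ℝ := A.submatrix id dc with hM
  -- the two special cofactors
  have hsublast : M.submatrix id (Fin.last m).succAbove = A.submatrix id c := by
    ext a b
    simp only [Matrix.submatrix_apply, id_eq, hM, Fin.succAbove_last]
    rw [hdcast]
  have hrange : Set.range (dc ∘ (Fin.castSucc js).succAbove) = Set.range c' := by
    rw [Set.range_comp, Fin.range_succAbove]
    apply Set.eq_of_subset_of_subset
    · rintro p ⟨b, hb, rfl⟩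
      induction b using Fin.lastCases with
      | last => rw [hdlast]; exact Set.mem_range_self js
      | cast kb =>
        have hkb : kb ≠ js := fun h => hb (by rw [h]; rfl)
        rw [hdcast, ← hcc' kb hkb]
        exact Set.mem_range_self kb
    · rintro p ⟨jj, rfl⟩
      rcases eq_or_ne jj js with rfl | hjj
      · exact ⟨Fin.last m, Set.mem_compl_singleton_iff.mpr (Fin.castSucc_lt_last jj).ne', hdlast⟩
      · refine ⟨Fin.castSucc jj, ?_, by rw [hdcast]; exact (hcc' jj hjj).symm⟩
        simp only [Set.mem_compl_iff, Set.mem_singleton_iff]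
        exact fun h => hjj (Fin.castSucc_injective _ h)
  have hsubjs : |(M.submatrix id (Fin.castSucc js).succAbove).det|
      = |(A.submatrix id c').det| := by
    have : M.submatrix id (Fin.castSucc js).succAbove
        = A.submatrix id (dc ∘ (Fin.castSucc js).succAbove) := by
      ext a b; simp [hM]
    rw [this]
    exact abs_det_submatrix_congr A (hdinj.comp (Fin.succAbove_right_injective)) hrange
  set x := cof M with hx
  have hxlast : x (Fin.last m) ≠ 0 := by
    intro h0
    rw [hx] at h0
    unfold cof at h0
    rw [hsublast] at h0
    rcases mul_eq_zero.mp h0 with h1 | h1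
    · exact pow_ne_zero _ (by norm_num : (-1:ℝ) ≠ 0) h1
    · exact hc h1
  have hxjs : |x (Fin.castSucc js)| = |(A.submatrix id c').det| := by
    rw [hx]
    unfold cof
    rw [abs_mul, abs_pow]
    norm_num
    exact hsubjs
  have hxjs' : x (Fin.castSucc js) ≠ 0 := by
    intro h0
    rw [h0, abs_zero] at hxjs
    exact hc' (by rwa [eq_comm, abs_eq_zero] at hxjs)
  have hxlastabs : |x (Fin.last m)| = |(A.submatrix id c).det| := by
    rw [hx]
    unfold cof
    rw [hsublast, abs_mul, abs_pow]
    norm_num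
  -- the elementary vector
  set gg : Fin n → ℝ := pushVec dc x with hgg
  have hggdc : ∀ a, gg (dc a) = x a := fun a => by rw [hgg]; exact pushVec_apply hdinj x a
  have hggzero : ∀ p, (∀ a, dc a ≠ p) → gg p = 0 := fun p hp => by
    rw [hgg]; exact pushVec_eq_zero hp x
  have hAgg : ∀ (h : Fin n → ℝ), (∀ p, h p ≠ 0 → ∃ a, dc a = p) →
      ∀ rr, A.mulVec h rr = ∑ a, A rr (dc a) * h (dc a) := by
    intro h hsupp rr
    refine (sum_comp_inj hdinj (fun p => A rr p * h p) (fun p hp => ?_)).symm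
    show A rr p * h p = 0
    rcases eq_or_ne (h p) 0 with h0 | h0
    · rw [h0, mul_zero]
    · exact absurd (hsupp p h0) (by push_neg; exact hp)
  have hggsupp : ∀ p, gg p ≠ 0 → ∃ a, dc a = p := by
    intro p hp
    by_contra hno
    push_neg at hno
    exact hp (hggzero p hno)
  have hggker : gg ∈ LinearMap.ker A.mulVecLin := by
    rw [LinearMap.mem_ker, Matrix.mulVecLin_apply]
    funext rr
    simp only [Pi.zero_apply]
    rw [hAgg gg hggsupp rr]
    calc ∑ a, A rr (dc a) * gg (dc a) = ∑ a, M rr a * x a := by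
          refine Finset.sum_congr rfl (fun a _ => ?_)
          rw [hggdc, hM]; rfl
      _ = M.mulVec x rr := rfl
      _ = 0 := by rw [mulVec_cof]; rfl
  have hggne : gg ≠ 0 := fun h0 => hxlast (by rw [← hggdc (Fin.last m), h0, Pi.zero_apply])
  have hggelem : IsElementary (LinearMap.ker A.mulVecLin) gg := by
    refine ⟨hggker, hggne, ?_⟩
    intro h hker hne hsub
    have hsupp : ∀ p, h p ≠ 0 → ∃ a, dc a = p := fun p hp => hggsupp p (hsub hp)
    have hMh : M.mulVec (h ∘ dc) = 0 := by
      funext rr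
      simp only [Pi.zero_apply]
      have h2 : A.mulVec h rr = 0 := by
        rw [LinearMap.mem_ker, Matrix.mulVecLin_apply] at hker
        rw [hker]; rfl
      rw [hAgg h hsupp rr] at h2
      calc M.mulVec (h ∘ dc) rr = ∑ a, M rr a * (h ∘ dc) a := rfl
        _ = ∑ a, A rr (dc a) * h (dc a) := by
            refine Finset.sum_congr rfl (fun a _ => ?_)
            rw [hM]; rfl
        _ = 0 := h2
    have heq := eq_smul_cof M (Fin.last m) hxlast (h ∘ dc) hMh
    set lam := (h ∘ dc) (Fin.last m) / cof M (Fin.last m) with hlam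
    have hha : ∀ a, h (dc a) = lam * x a := fun a => by
      have := congrFun heq a
      simpa using this
    have hlamne : lam ≠ 0 := by
      intro h0
      apply hne
      funext p
      rcases eq_or_ne (h p) 0 with hp0 | hp0
      · rw [hp0]; rfl
      · obtain ⟨a, rfl⟩ := hsupp p hp0
        rw [hha a, h0, zero_mul]; rfl
    ext p
    simp only [Set.mem_setOf_eq]
    constructor
    · exact fun hp => hsub hp
    · intro hp
      obtain ⟨a, rfl⟩ := hggsupp p hp
      rw [hha a]
      rw [hggdc] at hp
      exact mul_ne_zero hlamne hp
  have hfin := hu gg hggelem (dc (Fin.last m)) (dc (Fin.castSucc js))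
    (by rw [hggdc]; exact hxlast) (by rw [hggdc]; exact hxjs')
  rw [hggdc, hggdc] at hfin
  rw [← hxjs, ← hxlastabs, hfin]

lemma maximal_minors_pm_one {m n : ℕ} (A : Matrix (Fin m) (Fin n) ℝ)
    (hu : UnitRatios (LinearMap.ker A.mulVecLin))
    (c0 : Fin m → Fin n) (hc0 : A.submatrix id c0 = 1) :
    ∀ c : Fin m → Fin n, (A.submatrix id c).det = 0 ∨ |(A.submatrix id c).det| = 1 := by
  classical
  have hc0det : (A.submatrix id c0).det ≠ 0 := by rw [hc0, Matrix.det_one]; norm_num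
  have hc0inj : Function.Injective c0 := col_inj_of_det hc0det
  suffices H : ∀ (t : ℕ) (c : Fin m → Fin n),
      ((Finset.univ.image c) \ (Finset.univ.image c0)).card ≤ t →
      (A.submatrix id c).det = 0 ∨ |(A.submatrix id c).det| = 1 by
    intro c; exact H _ c le_rfl
  intro t
  induction t with
  | zero =>
    intro c hct
    by_cases hdet : (A.submatrix id c).det = 0
    · exact Or.inl hdet
    right
    have hcinj : Function.Injective c := col_inj_of_det hdet
    have hsub : (Finset.univ.image c) ⊆ (Finset.univ.image c0) := by
      rw [← Finset.sdiff_eq_empty_iff_subset]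
      exact Finset.card_eq_zero.mp (Nat.le_zero.mp hct)
    have hcardeq : (Finset.univ.image c) = (Finset.univ.image c0) := by
      apply Finset.eq_of_subset_of_card_le hsub
      rw [Finset.card_image_of_injective _ hc0inj, Finset.card_image_of_injective _ hcinj]
    have hrange : Set.range c = Set.range c0 := by
      have h1 : Set.range c = ↑(Finset.univ.image c) := by
        rw [Finset.coe_image, Finset.coe_univ, Set.image_univ]
      have h2 : Set.range c0 = ↑(Finset.univ.image c0) := by
        rw [Finset.coe_image, Finset.coe_univ, Set.image_univ]
      rw [h1, h2, hcardeq]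
    have := abs_det_submatrix_congr A (col_inj_of_det hdet) hrange
    rw [this, hc0, Matrix.det_one, abs_one]
  | succ t ih =>
    intro c hct
    by_cases hdet : (A.submatrix id c).det = 0
    · exact Or.inl hdet
    right
    have hcinj : Function.Injective c := col_inj_of_det hdet
    by_cases hemp : ((Finset.univ.image c) \ (Finset.univ.image c0)) = ∅
    · -- same as base case
      have h0 : ((Finset.univ.image c) \ (Finset.univ.image c0)).card ≤ 0 := by
        rw [hemp]; simp
      rcases ih c (h0.trans (Nat.zero_le t)) with h | h
      · exact absurd h hdet
      · exact h
    obtain ⟨q, hq⟩ := Finset.nonempty_iff_ne_empty.mpr hemp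
    obtain ⟨hqc, hqc0⟩ := Finset.mem_sdiff.mp hq
    obtain ⟨js, _, rfl⟩ := Finset.mem_image.mp hqc
    -- column vectors
    set v : Fin n → (Fin m → ℝ) := fun p => (fun i => A i p) with hv
    have hvind : LinearIndependent ℝ (fun jj => v (c jj)) := by
      have hB : IsUnit (A.submatrix id c) :=
        (Matrix.isUnit_iff_isUnit_det _).mpr (isUnit_iff_ne_zero.mpr hdet)
      have := Matrix.linearIndependent_cols_iff_isUnit.mpr hB
      exact this
    set Sset : Set (Fin m → ℝ) := (fun jj => v (c jj)) '' {jj | jj ≠ js} with hSset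
    have hSfin : Sset = ↑((Finset.univ.erase js).image (fun jj => v (c jj))) := by
      ext y
      simp only [hSset, Set.mem_image, Set.mem_setOf_eq, Finset.coe_image, Set.mem_image,
        Finset.mem_coe, Finset.mem_erase, Finset.mem_univ, and_true]
      all_goals tauto
    have hex : ∃ i0, v (c0 i0) ∉ Submodule.span ℝ Sset := by
      by_contra hno
      push_neg at hno
      have hbas : ∀ k, v (c0 k) = Pi.single k (1:ℝ) := by
        intro k
        funext ii
        have h3 := congrFun (congrFun hc0 ii) k
        simp only [Matrix.submatrix_apply, id_eq] at h3
        show A ii (c0 k) = _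
        rw [h3, Matrix.one_apply, Pi.single_apply]
      have hxsum : ∀ x : Fin m → ℝ, x = ∑ k, x k • v (c0 k) := by
        intro x
        funext jx
        rw [Finset.sum_apply]
        simp only [hbas, Pi.smul_apply, Pi.single_apply, smul_eq_mul, mul_ite, mul_one, mul_zero]
        rw [Finset.sum_ite_eq]
        simp
      have htop : Submodule.span ℝ Sset = ⊤ := by
        rw [eq_top_iff]
        intro x _
        rw [hxsum x]
        exact Submodule.sum_mem _ (fun k _ => Submodule.smul_mem _ _ (hno k))
      have h1 : Module.finrank ℝ (Submodule.span ℝ Sset) = m := by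
        rw [htop, finrank_top, Module.finrank_fin_fun]
      have h2 : Module.finrank ℝ (Submodule.span ℝ Sset) ≤ m - 1 := by
        rw [hSfin]
        refine le_trans (finrank_span_finset_le_card _) ?_
        refine le_trans (Finset.card_image_le) ?_
        rw [Finset.card_erase_of_mem (Finset.mem_univ js), Finset.card_univ, Fintype.card_fin]
      have hm : 0 < m := js.pos
      omega
    obtain ⟨i0, hi0⟩ := hex
    set c' : Fin m → Fin n := Function.update c js (c0 i0) with hc'
    have hc'js : c' js = c0 i0 := Function.update_self js (c0 i0) c
    have hc'o : ∀ j, j ≠ js → c' j = c j := fun j hj => Function.update_of_ne hj (c0 i0) c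
    have hc'det : (A.submatrix id c').det ≠ 0 := by
      have hind' : LinearIndependent ℝ (fun jj => v (c' jj)) := by
        rw [Fintype.linearIndependent_iff]
        intro μ hμ
        have hsplit : μ js • v (c' js) + ∑ jj ∈ Finset.univ.erase js, μ jj • v (c' jj) = 0 := by
          rw [Finset.add_sum_erase Finset.univ (fun jj => μ jj • v (c' jj)) (Finset.mem_univ js)]
          exact hμ
        have hTmem : ∑ jj ∈ Finset.univ.erase js, μ jj • v (c' jj) ∈ Submodule.span ℝ Sset := by
          apply Submodule.sum_mem
          intro jj hjj
          have hjjne : jj ≠ js := (Finset.mem_erase.mp hjj).1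
          rw [hc'o jj hjjne]
          exact Submodule.smul_mem _ _ (Submodule.subset_span ⟨jj, hjjne, rfl⟩)
        have hμjs : μ js = 0 := by
          by_contra hne
          apply hi0
          rw [← hc'js]
          have hT : μ js • v (c' js)
              = -∑ jj ∈ Finset.univ.erase js, μ jj • v (c' jj) := by
            exact add_eq_zero_iff_eq_neg.mp hsplit
          have h5 : v (c' js) = (μ js)⁻¹ • (μ js • v (c' js)) := by
            rw [smul_smul, inv_mul_cancel₀ hne, one_smul]
          rw [h5, hT]
          exact Submodule.smul_mem _ _ (Submodule.neg_mem _ hTmem)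
        have hfull : ∑ jj, μ jj • v (c jj) = 0 := by
          rw [← Finset.add_sum_erase Finset.univ (fun jj => μ jj • v (c jj)) (Finset.mem_univ js),
            hμjs, zero_smul, zero_add]
          rw [hμjs, zero_smul, zero_add] at hsplit
          rw [← hsplit]
          apply Finset.sum_congr rfl
          intro jj hjj
          rw [hc'o jj (Finset.mem_erase.mp hjj).1]
        intro jj
        exact (Fintype.linearIndependent_iff.mp hvind) μ hfull jj
      have hB : IsUnit (A.submatrix id c') := by
        apply Matrix.linearIndependent_cols_iff_isUnit.mp
        exact hind'
      intro h0
      exact (isUnit_iff_ne_zero.mp ((Matrix.isUnit_iff_isUnit_det _).mp hB)) h0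
    have hmeas : ((Finset.univ.image c') \ (Finset.univ.image c0)).card ≤ t := by
      have hsub : ((Finset.univ.image c') \ (Finset.univ.image c0)) ⊆
          ((Finset.univ.image c) \ (Finset.univ.image c0)).erase (c js) := by
        intro x hx
        obtain ⟨hxc', hxc0⟩ := Finset.mem_sdiff.mp hx
        obtain ⟨jj, _, rfl⟩ := Finset.mem_image.mp hxc'
        have hjjne : jj ≠ js := by
          intro h
          subst h
          exact hxc0 (by rw [hc'js]; exact Finset.mem_image_of_mem c0 (Finset.mem_univ i0))
        rw [hc'o jj hjjne]
        refine Finset.mem_erase.mpr ⟨fun h => hjjne (hcinj h), ?_⟩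
        rw [hc'o jj hjjne] at hxc0
        exact Finset.mem_sdiff.mpr ⟨Finset.mem_image_of_mem c (Finset.mem_univ jj), hxc0⟩
      have h1 := Finset.card_le_card hsub
      rw [Finset.card_erase_of_mem hq] at h1
      omega
    rcases ih c' hmeas with h | h
    · exact absurd h hc'det
    · rw [← abs_det_exchange A hu c c' js hc'o hdet hc'det]
      exact h

lemma isTU_of_maximal_minors {m n : ℕ} (A : Matrix (Fin m) (Fin n) ℝ)
    (c0 : Fin m → Fin n) (hc0 : A.submatrix id c0 = 1)
    (H : ∀ c : Fin m → Fin n, (A.submatrix id c).det = 0 ∨ |(A.submatrix id c).det| = 1) :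
    IsTU A := by
  classical
  intro k r c
  by_cases hr : Function.Injective r
  case neg =>
    left
    obtain ⟨a, b, hab, hne⟩ := Function.not_injective_iff.mp hr
    exact Matrix.det_zero_of_row_eq hne (funext fun x => by simp [Matrix.submatrix_apply, hab])
  have hkm : k ≤ m := by
    have := Fintype.card_le_of_injective r hr
    simpa using this
  set Rc : Finset (Fin m) := Finset.univ \ Finset.univ.image r with hRc
  have hRccard : Rc.card = m - k := by
    rw [hRc, Finset.card_sdiff_of_subset (Finset.subset_univ _), Finset.card_image_of_injective _ hr]
    simp
  set rc : Fin (m - k) → Fin m := fun a => (Rc.orderIsoOfFin hRccard a : Fin m) with hrc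
  have hrcinj : Function.Injective rc := fun a b hab =>
    (Rc.orderIsoOfFin hRccard).injective (Subtype.ext hab)
  have hrcmem : ∀ a, rc a ∈ Rc := fun a => (Rc.orderIsoOfFin hRccard a).2
  have hdisj : ∀ a b, r a ≠ rc b := by
    intro a b h
    have h2 := hrcmem b
    rw [hRc, Finset.mem_sdiff] at h2
    exact h2.2 (h ▸ Finset.mem_image_of_mem r (Finset.mem_univ a))
  set f : Fin k ⊕ Fin (m - k) → Fin m := Sum.elim r rc with hf
  have hfinj : Function.Injective f := by
    rintro (a | a) (b | b) h
    · exact congrArg Sum.inl (hr h)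
    · exact absurd h (hdisj a b)
    · exact absurd h.symm (hdisj b a)
    · exact congrArg Sum.inr (hrcinj h)
  have hfbij : Function.Bijective f := by
    rw [Fintype.bijective_iff_injective_and_card]
    constructor
    · exact hfinj
    · simp only [Fintype.card_sum, Fintype.card_fin]
      omega
  set σ : (Fin k ⊕ Fin (m - k)) ≃ Fin m := Equiv.ofBijective f hfbij with hσ
  set cols : Fin k ⊕ Fin (m - k) → Fin n := Sum.elim c (c0 ∘ rc) with hcols
  set N : Matrix (Fin k ⊕ Fin (m - k)) (Fin k ⊕ Fin (m - k)) ℝ :=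
    A.submatrix f cols with hN
  have hentry : ∀ (i : Fin m) (jj : Fin m), A i (c0 jj) = if i = jj then 1 else 0 := by
    intro i jj
    have := congrFun (congrFun hc0 i) jj
    simp only [Matrix.submatrix_apply, id_eq] at this
    rw [this, Matrix.one_apply]
  have hNblocks : N = Matrix.fromBlocks (A.submatrix r c) 0 (A.submatrix rc c)
      (1 : Matrix (Fin (m - k)) (Fin (m - k)) ℝ) := by
    ext (a | a) (b | b)
    · simp [hN, hf, hcols]
    · simp only [hN, Matrix.submatrix_apply, hf, hcols, Sum.elim_inl, Sum.elim_inr,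
        Function.comp_apply, Matrix.fromBlocks_apply₁₂, Matrix.zero_apply]
      rw [hentry]
      simp [hdisj a b]
    · simp [hN, hf, hcols]
    · simp only [hN, Matrix.submatrix_apply, hf, hcols, Sum.elim_inr,
        Function.comp_apply, Matrix.fromBlocks_apply₂₂]
      rw [hentry, Matrix.one_apply]
      simp [hrcinj.eq_iff]
  have hdetN : N.det = (A.submatrix r c).det := by
    rw [hNblocks, Matrix.det_fromBlocks_zero₁₂, Matrix.det_one, mul_one]
  have hbig : A.submatrix id (cols ∘ σ.symm) = N.submatrix σ.symm σ.symm := by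
    ext x y
    simp only [Matrix.submatrix_apply, id_eq, hN]
    congr 1
    exact (σ.apply_symm_apply x).symm
  have hdetbig : (A.submatrix id (cols ∘ σ.symm)).det = N.det := by
    rw [hbig, Matrix.det_submatrix_equiv_self]
  rcases H (cols ∘ σ.symm) with h | h
  · left
    rw [← hdetN, ← hdetbig]
    exact h
  · rw [hdetbig, hdetN] at h
    rcases abs_eq (by norm_num : (0:ℝ) ≤ 1) |>.mp h with h1 | h1
    · exact Or.inr (Or.inl h1)
    · exact Or.inr (Or.inr h1)


lemma exists_base_matrix {n : ℕ} (W : Submodule ℝ (Fin n → ℝ)) :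
    ∃ (m : ℕ) (A : Matrix (Fin m) (Fin n) ℝ) (c0 : Fin m → Fin n),
      A.submatrix id c0 = 1 ∧ W = LinearMap.ker A.mulVecLin := by
  classical
  set m := Module.finrank ℝ ((Fin n → ℝ) ⧸ W) with hm
  set bQ : Module.Basis (Fin m) ℝ ((Fin n → ℝ) ⧸ W) := Module.finBasis ℝ _ with hbQ
  set A₀ : Matrix (Fin m) (Fin n) ℝ :=
    LinearMap.toMatrix (Pi.basisFun ℝ (Fin n)) bQ W.mkQ with hA₀
  have hmul : ∀ x : Fin n → ℝ, A₀.mulVec x = fun i => bQ.repr (W.mkQ x) i := by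
    intro x
    have hx : ⇑((Pi.basisFun ℝ (Fin n)).repr x) = x := by
      funext i
      simp
    have := LinearMap.toMatrix_mulVec_repr (Pi.basisFun ℝ (Fin n)) bQ W.mkQ x
    rw [hx] at this
    rw [hA₀, this]
  have hker : W = LinearMap.ker A₀.mulVecLin := by
    ext x
    rw [LinearMap.mem_ker, Matrix.mulVecLin_apply, hmul x]
    constructor
    · intro hx
      have : W.mkQ x = 0 := by
        rw [Submodule.mkQ_apply, Submodule.Quotient.mk_eq_zero]
        exact hx
      funext i
      rw [this]
      simp
    · intro hx
      have h0 : bQ.repr (W.mkQ x) = 0 := by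
        ext i
        exact congrFun hx i
      have : W.mkQ x = 0 := by
        have := congrArg bQ.repr.symm h0
        rwa [LinearEquiv.symm_apply_apply, map_zero] at this
      rwa [Submodule.mkQ_apply, Submodule.Quotient.mk_eq_zero] at this
  have hsurj : Function.Surjective A₀.mulVecLin := by
    intro y
    obtain ⟨q, hq⟩ := W.mkQ_surjective (bQ.equivFun.symm y)
    refine ⟨q, ?_⟩
    rw [Matrix.mulVecLin_apply, hmul q, hq]
    funext i
    have h2 : bQ.equivFun (bQ.equivFun.symm y) = y := bQ.equivFun.apply_symm_apply y
    rw [Module.Basis.equivFun_apply] at h2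
    exact congrFun h2 i
  have hrank : A₀.rank = m := by
    rw [Matrix.rank]
    have h3 : LinearMap.range A₀.mulVecLin = ⊤ := LinearMap.range_eq_top.mpr hsurj
    rw [h3, finrank_top, Module.finrank_fin_fun]
  have hrows : LinearIndependent ℝ (fun i : Fin m => (A₀ᵀ)ᵀ i) := by
    rw [linearIndependent_iff_card_eq_finrank_span, Fintype.card_fin]
    have h4 := Matrix.rank_eq_finrank_span_row A₀
    rw [hrank] at h4
    exact h4
  obtain ⟨c0, hc0det⟩ := exists_rows_det_ne_zero A₀ᵀ hrows
  have hdet0 : (A₀.submatrix id c0).det ≠ 0 := by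
    have h5 : (A₀ᵀ.submatrix c0 id) = (A₀.submatrix id c0)ᵀ := by
      ext i j
      simp [Matrix.transpose_apply]
    rw [h5, Matrix.det_transpose] at hc0det
    exact hc0det
  set B := A₀.submatrix id c0 with hB
  have hBunit : IsUnit B.det := isUnit_iff_ne_zero.mpr hdet0
  set A : Matrix (Fin m) (Fin n) ℝ := B⁻¹ * A₀ with hA
  refine ⟨m, A, c0, ?_, ?_⟩
  · have hsub : A.submatrix id c0 = B⁻¹ * B := by
      ext i j
      rw [hA]
      simp [Matrix.mul_apply, Matrix.submatrix_apply, hB]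
    rw [hsub, Matrix.nonsing_inv_mul B hBunit]
  · rw [hker]
    ext x
    rw [LinearMap.mem_ker, LinearMap.mem_ker, Matrix.mulVecLin_apply, Matrix.mulVecLin_apply]
    constructor
    · intro h0
      rw [hA, ← Matrix.mulVec_mulVec, h0, Matrix.mulVec_zero]
    · intro h0
      have h6 := congrArg (fun v => B.mulVec v) h0
      simp only [Matrix.mulVec_zero] at h6
      rw [hA, ← Matrix.mulVec_mulVec, Matrix.mulVec_mulVec, Matrix.mul_nonsing_inv B hBunit,
        Matrix.one_mulVec] at h6
      exact h6


end KappaTU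

/-- `κ_W = 1` iff `W` is the kernel of a totally unimodular matrix. -/
theorem kappa_eq_one_iff_TU {n : ℕ} (W : Submodule ℝ (Fin n → ℝ)) :
    kappa W = 1 ↔ ∃ (m : ℕ) (A : Matrix (Fin m) (Fin n) ℝ),
      IsTU A ∧ W = LinearMap.ker A.mulVecLin := by
  rw [KappaTU.kappa_eq_one_iff]
  constructor
  · intro hu
    obtain ⟨m, A, c0, hid, hker⟩ := KappaTU.exists_base_matrix W
    refine ⟨m, A, ?_, hker⟩
    apply KappaTU.isTU_of_maximal_minors A c0 hid
    apply KappaTU.maximal_minors_pm_one A ?_ c0 hid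
    rw [← hker]
    exact hu
  · rintro ⟨m, A, hTU, rfl⟩
    exact KappaTU.unitRatios_of_TU A hTU
end

section
/- Let W ⊂ R^n be a linear subspace with κ_W = 1, and let A be any matrix in basis form (i.e., containing an identity submatrix on some basis of columns) with W = ker(A). Then A is totally unimodular. -/
open Finset

variable {ι : Type*} [Fintype ι] [DecidableEq ι]

private lemma abs_eq_abs_of_kappa_eq_one {n : ℕ} {W : Submodule ℝ (Fin n → ℝ)}
    (hk : kappa W = 1) {g : Fin n → ℝ} (hg : IsElementary W g)
    {i j : Fin n} (hi : g i ≠ 0) (hj : g j ≠ 0) : |g j| = |g i| := by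
  set S := ({1} ∪ {t : ℝ | ∃ g : Fin n → ℝ, IsElementary W g ∧
    ∃ i j, g i ≠ 0 ∧ g j ≠ 0 ∧ t = |g j| / |g i|}) with hS
  have hk' : sSup S = 1 := hk
  have hbdd : BddAbove S := by
    by_contra hbb
    rw [Real.sSup_of_not_bddAbove hbb] at hk'
    norm_num at hk'
  have hmem : ∀ t ∈ S, t ≤ 1 := fun t ht => hk' ▸ le_csSup hbdd ht
  have h1 : |g j| / |g i| ≤ 1 := hmem _ (Or.inr ⟨g, hg, i, j, hi, hj, rfl⟩)
  have h2 : |g i| / |g j| ≤ 1 := hmem _ (Or.inr ⟨g, hg, j, i, hj, hi, rfl⟩)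
  have hgi : 0 < |g i| := abs_pos.mpr hi
  have hgj : 0 < |g j| := abs_pos.mpr hj
  have := (div_le_one hgi).mp h1
  have := (div_le_one hgj).mp h2
  linarith

private lemma entries_mem_of_kappa_eq_one {m n : ℕ} {W : Submodule ℝ (Fin n → ℝ)}
    (hk : kappa W = 1) (A : Matrix (Fin m) (Fin n) ℝ)
    (hker : LinearMap.ker A.mulVecLin = W)
    (b : Fin m → Fin n) (hb : Function.Injective b)
    (hbasis : ∀ i j : Fin m, A i (b j) = if i = j then 1 else 0) :
    ∀ i j, A i j = 0 ∨ A i j = 1 ∨ A i j = -1 := by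
  intro i j
  by_cases hjb : ∃ i0, b i0 = j
  · obtain ⟨i0, rfl⟩ := hjb
    rw [hbasis]
    split
    · right; left; rfl
    · left; rfl
  push_neg at hjb
  set g : Fin n → ℝ :=
    fun p => (if p = j then 1 else 0) - ∑ i', if p = b i' then A i' j else 0 with hgdef
  have hgj : g j = 1 := by
    have hz : ∀ i' ∈ univ, (if j = b i' then A i' j else 0) = (0:ℝ) :=
      fun i' _ => if_neg (fun h => hjb i' h.symm)
    simp only [hgdef, if_pos rfl]
    rw [Finset.sum_congr rfl hz, Finset.sum_const_zero, sub_zero]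
    simp
  have hgb : ∀ i', g (b i') = -A i' j := by
    intro i'
    simp only [hgdef]
    rw [if_neg (hjb i'), Finset.sum_eq_single i'
      (fun k _ hk => if_neg (fun h => hk (hb h).symm)) (by simp), if_pos rfl]
    ring
  have hg0 : ∀ p, p ≠ j → (∀ i', b i' ≠ p) → g p = 0 := by
    intro p hp hbp
    simp only [hgdef, if_neg hp]
    rw [Finset.sum_congr rfl (fun i' _ => if_neg (fun h => hbp i' h.symm)),
      Finset.sum_const_zero, sub_zero]
  -- lemma: for vectors supported on range b, (A *ᵥ h) r = h (b r)
  have hmv : ∀ h : Fin n → ℝ, (∀ p, (∀ i', b i' ≠ p) → h p = 0) →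
      ∀ r, A.mulVec h r = h (b r) := by
    intro h hh r
    show ∑ p, A r p * h p = h (b r)
    rw [← Finset.sum_subset (Finset.subset_univ (univ.image b))
      (fun p _ hp => by
        rw [hh p (fun i' he => hp (Finset.mem_image.mpr ⟨i', Finset.mem_univ _, he⟩)), mul_zero]),
      Finset.sum_image (fun a _ a' _ he => hb he)]
    simp only [hbasis, ite_mul, one_mul, zero_mul]
    rw [Finset.sum_ite_eq]
    simp
  -- g is in the kernel
  have hgker : A.mulVec g = 0 := by
    funext r
    show ∑ p, A r p * g p = 0
    simp only [hgdef, mul_sub]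
    rw [Finset.sum_sub_distrib]
    have e1 : ∑ p, A r p * (if p = j then (1:ℝ) else 0) = A r j := by
      simp only [mul_ite, mul_one, mul_zero]
      rw [Finset.sum_ite_eq']
      simp
    have e2 : ∑ p, A r p * ∑ i', (if p = b i' then A i' j else 0) = A r j := by
      simp only [Finset.mul_sum]
      rw [Finset.sum_comm]
      have : ∀ i' ∈ univ, ∑ p, A r p * (if p = b i' then A i' j else 0)
          = A r (b i') * A i' j := by
        intro i' _
        simp only [mul_ite, mul_zero]
        rw [Finset.sum_ite_eq']
        simp
      rw [Finset.sum_congr rfl this]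
      simp only [hbasis, ite_mul, one_mul, zero_mul]
      rw [Finset.sum_ite_eq]
      simp
    rw [e1, e2, sub_self]
  have hgW : g ∈ W := by
    rw [← hker]
    exact LinearMap.mem_ker.mpr (by simpa [Matrix.mulVecLin_apply] using hgker)
  -- any kernel vector supported on supp g is a multiple of g
  have hmult : ∀ h : Fin n → ℝ, h ∈ W → (∀ p, p ≠ j → (∀ i', b i' ≠ p) → h p = 0) →
      h = h j • g := by
    intro h hhW hh0
    have hhker : A.mulVec h = 0 := by
      rw [← hker] at hhW
      simpa [Matrix.mulVecLin_apply] using LinearMap.mem_ker.mp hhW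
    set h' : Fin n → ℝ := h - h j • g with hh'def
    have hh'j : h' j = 0 := by simp [hh'def, hgj]
    have hh'supp : ∀ p, (∀ i', b i' ≠ p) → h' p = 0 := by
      intro p hbp
      by_cases hpj : p = j
      · rw [hpj]; exact hh'j
      · simp [hh'def, hh0 p hpj hbp, hg0 p hpj hbp]
    have hh'ker : A.mulVec h' = 0 := by
      rw [hh'def, Matrix.mulVec_sub, Matrix.mulVec_smul, hhker, hgker]
      simp
    have hzero : h' = 0 := by
      funext p
      by_cases hpj : p = j
      · rw [hpj]; exact hh'j
      by_cases hpb : ∃ i', b i' = p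
      · obtain ⟨i', rfl⟩ := hpb
        rw [← hmv h' hh'supp i', hh'ker]
        rfl
      · push_neg at hpb
        exact hh'supp p hpb
    exact sub_eq_zero.mp hzero
  have hgelem : IsElementary W g := by
    refine ⟨hgW, fun h0 => ?_, fun h hhW hh0 hsupp => ?_⟩
    · have := congrFun h0 j
      rw [hgj] at this
      norm_num at this
    · have hh0' : ∀ p, p ≠ j → (∀ i', b i' ≠ p) → h p = 0 := by
        intro p hp hbp
        by_contra hc
        exact (hsupp hc) (hg0 p hp hbp)
      have hhg := hmult h hhW hh0'
      have hhj : h j ≠ 0 := by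
        intro h0
        apply hh0
        rw [hhg, h0, zero_smul]
      ext p
      simp only [Set.mem_setOf_eq]
      constructor
      · intro hp
        intro hgp
        apply hp
        rw [hhg, Pi.smul_apply, smul_eq_mul, hgp, mul_zero]
      · intro hgp
        rw [hhg, Pi.smul_apply, smul_eq_mul]
        exact mul_ne_zero hhj hgp
  by_cases hA : A i j = 0
  · exact Or.inl hA
  right
  have h1 : g (b i) ≠ 0 := by rw [hgb]; simpa using hA
  have h2 : g j ≠ 0 := by rw [hgj]; norm_num
  have habs := abs_eq_abs_of_kappa_eq_one hk hgelem h1 h2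
  rw [hgj, hgb, abs_neg, abs_one] at habs
  rcases (abs_eq (by norm_num : (0:ℝ) ≤ 1)).mp habs.symm with h | h
  · exact Or.inl h
  · exact Or.inr h

private lemma det_cols_mem_of_kappa_eq_one {m n : ℕ} {W : Submodule ℝ (Fin n → ℝ)}
    (hk : kappa W = 1) (A : Matrix (Fin m) (Fin n) ℝ)
    (hker : LinearMap.ker A.mulVecLin = W)
    (b : Fin m → Fin n) (hb : Function.Injective b)
    (hbasis : ∀ i j : Fin m, A i (b j) = if i = j then 1 else 0) :
    ∀ c : Fin m → Fin n, (A.submatrix id c).det = 0 ∨ (A.submatrix id c).det = 1 ∨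
      (A.submatrix id c).det = -1 := by
  suffices H : ∀ d (c : Fin m → Fin n), (univ.filter fun l => ∀ i, b i ≠ c l).card = d →
      (A.submatrix id c).det = 0 ∨ (A.submatrix id c).det = 1 ∨ (A.submatrix id c).det = -1 by
    intro c
    exact H _ c rfl
  intro d
  induction d using Nat.strong_induction_on with
  | _ d IH =>
  intro c hcard
  by_cases hdet : (A.submatrix id c).det = 0
  · exact Or.inl hdet
  right
  have hcinj : Function.Injective c := by
    intro l l' he
    by_contra hne
    exact hdet (Matrix.det_zero_of_column_eq hne (fun r => by
      simp [Matrix.submatrix_apply, he]))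
  set B := A.submatrix id c with hB
  have hBu : IsUnit B.det := isUnit_iff_ne_zero.mpr hdet
  set M := B⁻¹ * A with hM
  have hBM : B * M = A := Matrix.mul_nonsing_inv_cancel_left B A hBu
  have hMker : LinearMap.ker M.mulVecLin = W := by
    rw [← hker]
    ext x
    simp only [LinearMap.mem_ker, Matrix.mulVecLin_apply]
    constructor
    · intro hx
      have : A.mulVec x = (B * M).mulVec x := by rw [hBM]
      rw [this, ← Matrix.mulVec_mulVec, hx, Matrix.mulVec_zero]
    · intro hx
      rw [hM, ← Matrix.mulVec_mulVec, hx, Matrix.mulVec_zero]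
  have hMbasis : ∀ i i' : Fin m, M i (c i') = if i = i' then 1 else 0 := by
    intro i i'
    have h1 : M i (c i') = (B⁻¹ * B) i i' := by
      simp only [hM, Matrix.mul_apply, hB, Matrix.submatrix_apply, id]
    rw [h1, Matrix.nonsing_inv_mul _ hBu, Matrix.one_apply]
  have hMent := entries_mem_of_kappa_eq_one hk M hMker c hcinj hMbasis
  rcases Nat.eq_zero_or_pos d with hd | hd
  · -- base case: all columns basic
    subst hd
    rw [Finset.card_eq_zero] at hcard
    have hall : ∀ l, ∃ i, b i = c l := by
      intro l
      by_contra hno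
      push_neg at hno
      have : l ∈ univ.filter fun l => ∀ i, b i ≠ c l := mem_filter.mpr ⟨mem_univ _, hno⟩
      rw [hcard] at this
      exact absurd this (notMem_empty l)
    choose σ hσ using hall
    have hσinj : Function.Injective σ := fun l l' h => hcinj (by rw [← hσ, ← hσ, h])
    have hBperm : ∀ r l, B r l = if r = σ l then 1 else 0 := by
      intro r l
      rw [hB]
      show A r (c l) = _
      rw [← hσ l, hbasis]
    have hT : B.transpose * B = 1 := by
      ext l l'
      simp only [Matrix.mul_apply, Matrix.transpose_apply, hBperm, Matrix.one_apply,
        ite_mul, one_mul, zero_mul]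
      rw [Finset.sum_ite_eq']
      simp [hσinj.eq_iff]
    have hsq : B.det * B.det = 1 := by
      have := congrArg Matrix.det hT
      rwa [Matrix.det_mul, Matrix.det_transpose, Matrix.det_one] at this
    exact mul_self_eq_one_iff.mp hsq
  · -- inductive step
    have hne : (univ.filter fun l => ∀ i, b i ≠ c l).Nonempty :=
      Finset.card_pos.mp (hcard ▸ hd)
    obtain ⟨l, hl⟩ := hne
    have hl' : ∀ i, b i ≠ c l := (mem_filter.mp hl).2
    have hBinv : ∀ i, B⁻¹ l i = M l (b i) := by
      intro i
      simp only [hM, Matrix.mul_apply, hbasis, mul_ite, mul_one, mul_zero]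
      rw [Finset.sum_ite_eq']
      simp
    have hex : ∃ i, (∀ l', c l' ≠ b i) ∧ M l (b i) ≠ 0 := by
      by_contra hno
      push_neg at hno
      have hrow : ∀ i, M l (b i) = 0 := by
        intro i
        by_cases hmem : ∃ l', c l' = b i
        · obtain ⟨l', hl2⟩ := hmem
          rw [← hl2, hMbasis]
          exact if_neg (fun he => hl' i (by rw [← hl2, ← he]))
        · push_neg at hmem
          exact hno i hmem
      have hinv0 : (B⁻¹).det = 0 :=
        Matrix.det_eq_zero_of_row_eq_zero l (fun i => by rw [hBinv, hrow])
      have h1 : B.det * (B⁻¹).det = 1 := by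
        have := congrArg Matrix.det (Matrix.mul_nonsing_inv B hBu)
        rwa [Matrix.det_mul, Matrix.det_one] at this
      rw [hinv0, mul_zero] at h1
      norm_num at h1
    obtain ⟨i, hi1, hi2⟩ := hex
    set c' := Function.update c l (b i) with hc'
    have hupd : A.submatrix id c' = B.updateCol l (fun r => A r (b i)) := by
      ext r l'
      simp only [Matrix.submatrix_apply, id, Matrix.updateCol_apply, hc',
        Function.update_apply, hB]
      split <;> rfl
    have hadj : B.adjugate = B.det • B⁻¹ := by
      rw [Matrix.inv_def, smul_smul, Ring.inverse_eq_inv, mul_inv_cancel₀ hdet, one_smul]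
    have hdet' : (A.submatrix id c').det = B.det * M l (b i) := by
      rw [hupd, ← Matrix.cramer_apply, Matrix.cramer_eq_adjugate_mulVec, hadj,
        Matrix.smul_mulVec]
      simp only [Pi.smul_apply, smul_eq_mul]
      rfl
    have hcard' : (univ.filter fun l' => ∀ i', b i' ≠ c' l').card = d - 1 := by
      have hset : (univ.filter fun l' => ∀ i', b i' ≠ c' l')
          = (univ.filter fun l' => ∀ i', b i' ≠ c l').erase l := by
        ext l'
        simp only [Finset.mem_erase, mem_filter, mem_univ, true_and]
        constructor
        · intro h
          have hll : l' ≠ l := by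
            intro he
            apply h i
            rw [he, hc', Function.update_self]
          refine ⟨hll, fun i' => ?_⟩
          have := h i'
          rwa [hc', Function.update_of_ne hll] at this
        · rintro ⟨hll, h⟩ i'
          rw [hc', Function.update_of_ne hll]
          exact h i'
      rw [hset, Finset.card_erase_of_mem hl, hcard]
    have hM1 : M l (b i) = 1 ∨ M l (b i) = -1 := by
      rcases hMent l (b i) with h | h | h
      · exact absurd h hi2
      · exact Or.inl h
      · exact Or.inr h
    rcases IH (d - 1) (Nat.sub_lt hd one_pos) c' hcard' with h0 | h1 | h1
    · exfalso
      rw [hdet'] at h0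
      rcases mul_eq_zero.mp h0 with h | h
      · exact hdet h
      · exact hi2 h
    all_goals rw [hdet'] at h1
    all_goals rcases hM1 with hM1 | hM1 <;> rw [hM1] at h1
    · left; linarith
    · right; linarith
    · right; linarith
    · left; linarith

/-- if `κ_W = 1` then any matrix in basis form with kernel `W` is TU. -/
theorem basis_form_TU_of_kappa_eq_one {m n : ℕ} (W : Submodule ℝ (Fin n → ℝ))
    (hk : kappa W = 1) (A : Matrix (Fin m) (Fin n) ℝ)
    (hker : LinearMap.ker A.mulVecLin = W)
    (b : Fin m → Fin n) (hb : Function.Injective b)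
    (hbasis : ∀ i j : Fin m, A i (b j) = if i = j then 1 else 0) :
    IsTU A := by
  classical
  intro k r c
  by_cases hrinj : Function.Injective r
  swap
  · rw [Function.not_injective_iff] at hrinj
    obtain ⟨s, t, hst, hne⟩ := hrinj
    exact Or.inl (Matrix.det_zero_of_row_eq hne (funext fun l => by
      simp [Matrix.submatrix_apply, hst]))
  -- extend c to a full column selection
  set ct : Fin m → Fin n := fun i => if h : ∃ s, r s = i then c h.choose else b i with hct
  have hctr : ∀ s, ct (r s) = c s := by
    intro s
    have h : ∃ t, r t = r s := ⟨s, rfl⟩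
    rw [hct]
    simp only
    rw [dif_pos h]
    congr 1
    exact hrinj h.choose_spec
  have hctb : ∀ i, (¬ ∃ s, r s = i) → ct i = b i := fun i h => dif_neg h
  set e : (Fin k ⊕ {i : Fin m // ¬ i ∈ Set.range r}) ≃ Fin m :=
    (Equiv.sumCongr (Equiv.ofInjective r hrinj) (Equiv.refl _)).trans
      (Equiv.sumCompl (fun i => i ∈ Set.range r)) with he
  have he1 : ∀ s, e (Sum.inl s) = r s := by
    intro s
    simp [he, Equiv.ofInjective]
  have he2 : ∀ u, e (Sum.inr u) = u.1 := by
    intro u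
    simp [he]
  have hblocks : (A.submatrix id ct).submatrix e e =
      Matrix.fromBlocks (A.submatrix r c) 0 (A.submatrix Subtype.val c) 1 := by
    ext x y
    cases x with
    | inl s =>
      cases y with
      | inl t =>
        simp only [Matrix.submatrix_apply, he1, id, Matrix.fromBlocks_apply₁₁]
        rw [hctr]
      | inr u =>
        simp only [Matrix.submatrix_apply, he1, he2, id, Matrix.fromBlocks_apply₁₂]
        rw [hctb u.1 (by simpa [Set.mem_range] using u.2), hbasis]
        rw [if_neg]
        · rfl
        · intro hcon
          exact u.2 ⟨s, hcon⟩
    | inr u =>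
      cases y with
      | inl t =>
        simp only [Matrix.submatrix_apply, he1, he2, id, Matrix.fromBlocks_apply₂₁]
        rw [hctr]
      | inr u' =>
        simp only [Matrix.submatrix_apply, he2, id, Matrix.fromBlocks_apply₂₂]
        rw [hctb u'.1 (by simpa [Set.mem_range] using u'.2), hbasis, Matrix.one_apply]
        by_cases h : u = u'
        · rw [if_pos h, if_pos (by rw [h])]
        · rw [if_neg h, if_neg (fun hc => h (Subtype.ext hc))]
  have hdet : (A.submatrix id ct).det = (A.submatrix r c).det := by
    rw [← Matrix.det_submatrix_equiv_self e, hblocks, Matrix.det_fromBlocks_zero₁₂,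
      Matrix.det_one, mul_one]
  rw [← hdet]
  exact det_cols_mem_of_kappa_eq_one hk A hker b hb hbasis ct
end

section
/- For any linear subspace W ⊆ R^n, the circuit imbalances of W and its orthogonal complement are equal: κ_W = κ_{W^⊥}. -/
open Finset

variable {ι : Type*} [Fintype ι] [DecidableEq ι]

lemma mem_orthComp {ι : Type*} [Fintype ι] {W : Submodule ℝ (ι → ℝ)} {v : ι → ℝ} :
    v ∈ orthComp W ↔ ∀ w ∈ W, ∑ i, v i * w i = 0 := Iff.rfl

noncomputable def toEuc (n : ℕ) : EuclideanSpace ℝ (Fin n) ≃ₗ[ℝ] (Fin n → ℝ) :=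
  WithLp.linearEquiv 2 ℝ (Fin n → ℝ)

lemma orthComp_eq (n : ℕ) (W : Submodule ℝ (Fin n → ℝ)) :
    orthComp W = Submodule.map (toEuc n : EuclideanSpace ℝ (Fin n) →ₗ[ℝ] (Fin n → ℝ)) ((W.comap (toEuc n : EuclideanSpace ℝ (Fin n) →ₗ[ℝ] (Fin n → ℝ)))ᗮ) := by
  ext v
  simp only [Submodule.mem_map, mem_orthComp]
  constructor
  · intro h
    refine ⟨(toEuc n).symm v, ?_, by simp⟩
    rw [Submodule.mem_orthogonal]
    intro u hu
    simp only [Submodule.mem_comap] at hu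
    have := h _ hu
    simpa [toEuc, PiLp.inner_apply, RCLike.inner_apply, mul_comm] using this
  · rintro ⟨x, hx, rfl⟩ w hw
    rw [Submodule.mem_orthogonal] at hx
    have := hx ((toEuc n).symm w) (by simpa [Submodule.mem_comap] using hw)
    simpa [toEuc, PiLp.inner_apply, RCLike.inner_apply, mul_comm] using this

lemma orthComp_orthComp {n : ℕ} (W : Submodule ℝ (Fin n → ℝ)) :
    orthComp (orthComp W) = W := by
  rw [orthComp_eq, orthComp_eq, Submodule.comap_map_eq_of_injective (toEuc n).injective,
    Submodule.orthogonal_orthogonal, Submodule.map_comap_eq_of_surjective (toEuc n).surjective]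

lemma exists_vanishing {n : ℕ} (W : Submodule ℝ (Fin n → ℝ)) {g : Fin n → ℝ}
    (hg : IsElementary W g) {i j : Fin n} (hij : i ≠ j) (hi : g i ≠ 0) (hj : g j ≠ 0) :
    ∃ h, h ∈ orthComp W ∧ h i ≠ 0 ∧ ∀ k, g k ≠ 0 → k ≠ i → k ≠ j → h k = 0 := by
  classical
  set S : Set (Fin n) := {k | g k ≠ 0 ∧ k ≠ i ∧ k ≠ j} with hS
  set U : Submodule ℝ (Fin n → ℝ) := W ⊔ Submodule.span ℝ ((fun k => Pi.single k (1:ℝ)) '' S)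
    with hU
  by_contra hcon
  push_neg at hcon
  have hi0 : ∀ h ∈ orthComp U, h i = 0 := by
    intro h hUm
    have hW : h ∈ orthComp W := fun w hw => hUm w (Submodule.mem_sup_left hw)
    by_contra hne
    obtain ⟨k, hk1, hk2, hk3, hk4⟩ := hcon h hW hne
    have hmem : Pi.single k (1:ℝ) ∈ U :=
      Submodule.mem_sup_right (Submodule.subset_span ⟨k, ⟨hk1, hk2, hk3⟩, rfl⟩)
    have := hUm _ hmem
    simp [Pi.single_apply, Finset.sum_ite_eq'] at this
    exact hk4 this
  have hsing : Pi.single i (1:ℝ) ∈ orthComp (orthComp U) := by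
    intro h hUm
    have := hi0 h hUm
    simp [Pi.single_apply, Finset.sum_ite_eq, this]
  rw [orthComp_orthComp] at hsing
  obtain ⟨y, hy, z, hz, hyz⟩ := Submodule.mem_sup.mp hsing
  have hzS' : ∀ z' ∈ Submodule.span ℝ ((fun k => Pi.single k (1:ℝ)) '' S), ∀ k, k ∉ S → z' k = 0 := by
    intro z' hz'
    induction hz' using Submodule.span_induction with
    | mem x hx =>
      obtain ⟨k, hk, rfl⟩ := hx
      intro m hm
      have : m ≠ k := fun h => hm (h ▸ hk)
      simp [Pi.single_apply, this]
    | zero => simp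
    | add x y _ _ hx hy => intro m hm; simp [Pi.add_apply, hx m hm, hy m hm]
    | smul a x _ hx => intro m hm; simp [Pi.smul_apply, hx m hm]
  have hzS : ∀ k, k ∉ S → z k = 0 := hzS' z hz
  have hyeq : ∀ k, y k = (Pi.single i (1:ℝ) : Fin n → ℝ) k - z k := by
    intro k; have := congrFun hyz k; simp only [Pi.add_apply] at this; linarith
  have hyi : y i = 1 := by
    have := hyeq i
    rw [hzS i (by simp [hS])] at this
    simpa using this
  have hyj : y j = 0 := by
    have := hyeq j
    rw [hzS j (by simp [hS])] at this
    simpa [Pi.single_apply, hij.symm] using this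
  have hsupp : {k | y k ≠ 0} ⊆ {k | g k ≠ 0} := by
    intro k hk
    simp only [Set.mem_setOf_eq] at hk ⊢
    by_contra hgk
    have hki : k ≠ i := fun h => hi (h ▸ hgk)
    have : y k = 0 := by
      rw [hyeq k, hzS k (by simp [hS, hgk]), Pi.single_apply, if_neg hki]; ring
    exact hk this
  have := hg.2.2 y hy (fun h0 => by simp [h0] at hyi) hsupp
  have hjmem : j ∈ {k | g k ≠ 0} := hj
  rw [← this] at hjmem
  exact hjmem hyj

lemma ratio_dual {n : ℕ} (W : Submodule ℝ (Fin n → ℝ)) {g : Fin n → ℝ}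
    (hg : IsElementary W g) {i j : Fin n} (hij : i ≠ j) (hi : g i ≠ 0) (hj : g j ≠ 0) :
    ∃ h : Fin n → ℝ, IsElementary (orthComp W) h ∧ h i ≠ 0 ∧ h j ≠ 0 ∧
      |g j| / |g i| = |h i| / |h j| := by
  classical
  set T : Set (Fin n → ℝ) :=
    {h | h ∈ orthComp W ∧ h i ≠ 0 ∧ ∀ k, g k ≠ 0 → k ≠ i → k ≠ j → h k = 0} with hT
  have hTne : T.Nonempty := by
    obtain ⟨h, h1, h2, h3⟩ := exists_vanishing W hg hij hi hj
    exact ⟨h, h1, h2, h3⟩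
  set N : Set ℕ := {m | ∃ h ∈ T, m = (Finset.univ.filter (fun k => h k ≠ 0)).card} with hN
  have hNne : N.Nonempty := ⟨_, hTne.choose, hTne.choose_spec, rfl⟩
  obtain ⟨h, hhT, hhcard⟩ := Nat.sInf_mem hNne
  have hmin : ∀ h' ∈ T, sInf N ≤ (Finset.univ.filter (fun k => h' k ≠ 0)).card :=
    fun h' hh' => Nat.sInf_le ⟨h', hh', rfl⟩
  obtain ⟨hhW, hhi, hhS⟩ := hhT
  -- minimality implies elementarity
  have key : ∀ h' ∈ orthComp W, h' ≠ 0 → {k | h' k ≠ 0} ⊆ {k | h k ≠ 0} →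
      {k | h' k ≠ 0} = {k | h k ≠ 0} := by
    intro h' hh'W hh'ne hsub
    by_contra hne
    have hvan : ∀ k, h k = 0 → h' k = 0 := by
      intro k hk
      by_contra hk'
      exact (hsub hk') hk
    have hltcard : ∀ h'' : Fin n → ℝ, (∀ k, h k = 0 → h'' k = 0) → (∃ m, h m ≠ 0 ∧ h'' m = 0) →
        (Finset.univ.filter (fun k => h'' k ≠ 0)).card < sInf N := by
      intro h'' hsub'' ⟨m, hm1, hm2⟩
      rw [hhcard]
      apply Finset.card_lt_card
      constructor
      · intro k hk
        simp only [Finset.mem_filter, Finset.mem_univ, true_and] at hk ⊢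
        intro h0; exact hk (hsub'' k h0)
      · intro hcontra
        have := hcontra (by simp [hm1] : m ∈ Finset.univ.filter (fun k => h k ≠ 0))
        simp [hm2] at this
    by_cases hi' : h' i ≠ 0
    · -- h' itself is in T with smaller support
      have hT' : h' ∈ T := by
        refine ⟨hh'W, hi', fun k hk1 hk2 hk3 => ?_⟩
        by_contra hk'
        exact absurd (hsub hk') (by simp [hhS k hk1 hk2 hk3])
      have hssub : ∃ m, h m ≠ 0 ∧ h' m = 0 := by
        obtain ⟨k, hk1, hk2⟩ := Set.exists_of_ssubset (hsub.ssubset_of_ne hne)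
        exact ⟨k, hk1, of_not_not hk2⟩
      exact absurd (hmin h' hT') (by simpa using hltcard h' hvan hssub)
    · push_neg at hi'
      obtain ⟨m, hm⟩ := Function.ne_iff.mp hh'ne
      simp only [Pi.zero_apply] at hm
      have hhm : h m ≠ 0 := hsub hm
      set h'' : Fin n → ℝ := h - (h m / h' m) • h' with hh''
      have h''W : h'' ∈ orthComp W := sub_mem hhW (Submodule.smul_mem _ _ hh'W)
      have h''i : h'' i ≠ 0 := by simp [hh'', hi', hhi]
      have h''m : h'' m = 0 := by
        simp only [hh'', Pi.sub_apply, Pi.smul_apply, smul_eq_mul]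
        field_simp
        ring
      have h''sub : ∀ k, h k = 0 → h'' k = 0 := by
        intro k hk
        simp [hh'', hk, hvan k hk]
      have h''T : h'' ∈ T := by
        refine ⟨h''W, h''i, fun k hk1 hk2 hk3 => ?_⟩
        exact h''sub k (hhS k hk1 hk2 hk3)
      exact absurd (hmin h'' h''T) (by simpa using hltcard h'' h''sub ⟨m, hhm, h''m⟩)
  have helem : IsElementary (orthComp W) h :=
    ⟨hhW, fun h0 => hhi (by simp [h0]), key⟩
  -- orthogonality computation
  have horth : ∑ k, h k * g k = 0 := hhW g hg.1
  have hpair : ∑ k ∈ ({i, j} : Finset (Fin n)), h k * g k = 0 := by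
    rw [Finset.sum_subset (Finset.subset_univ _) ?_]
    · exact horth
    · intro x _ hx
      simp only [Finset.mem_insert, Finset.mem_singleton, not_or] at hx
      by_cases hgx : g x = 0
      · simp [hgx]
      · simp [hhS x hgx hx.1 hx.2]
  rw [Finset.sum_pair hij] at hpair
  have hhj : h j ≠ 0 := by
    intro h0
    rw [h0] at hpair
    exact mul_ne_zero hhi hi (by linarith)
  refine ⟨h, helem, hhi, hhj, ?_⟩
  rw [div_eq_div_iff (abs_ne_zero.2 hi) (abs_ne_zero.2 hhj)]
  have e1 : h i * g i = -(h j * g j) := by linarith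
  have e2 : |h i| * |g i| = |h j| * |g j| := by rw [← abs_mul, ← abs_mul, e1, abs_neg]
  linear_combination -e2

lemma kappa_ratio_subset {n : ℕ} (W : Submodule ℝ (Fin n → ℝ)) :
    ({1} ∪ {t : ℝ | ∃ g : Fin n → ℝ, IsElementary W g ∧
      ∃ i j, g i ≠ 0 ∧ g j ≠ 0 ∧ t = |g j| / |g i|}) ⊆
    ({1} ∪ {t : ℝ | ∃ g : Fin n → ℝ, IsElementary (orthComp W) g ∧
      ∃ i j, g i ≠ 0 ∧ g j ≠ 0 ∧ t = |g j| / |g i|}) := by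
  rintro t (ht | ⟨g, hg, i, j, hi, hj, rfl⟩)
  · exact Or.inl ht
  by_cases hij : i = j
  · subst hij
    exact Or.inl (by simp [div_self (abs_ne_zero.2 hi)])
  obtain ⟨h, helem, hhi, hhj, heq⟩ := ratio_dual W hg hij hi hj
  exact Or.inr ⟨h, helem, j, i, hhj, hhi, heq⟩

/-- the circuit imbalance is self-dual: `κ_W = κ_{W^⊥}`. -/
theorem kappa_self_dual {n : ℕ} (W : Submodule ℝ (Fin n → ℝ)) :
    kappa W = kappa (orthComp W) := by
  unfold kappa
  congr 1
  apply Set.Subset.antisymm (kappa_ratio_subset W)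
  have := kappa_ratio_subset (orthComp W)
  rwa [orthComp_orthComp] at this
end
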